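/- arXiv:1903.02810 — 6 statements merged into one kernel-verified Lean document; each statement's English description precedes it below -/
import Mathlib

section
/- Let a, c ∈ ℝ^n with a_i > 0 and c_i > 0 for all i, and let 0 ≤ b ≤ Σ_{i=1}^n a_i. A feasible point x (i.e., a^T x ≤ b and 0 ≤ x ≤ 1) is an optimal solution of the follower's continuous knapsack problem (maximize c^T x subject to a^T x ≤ b, 0 ≤ x ≤ 1) if and only if a^T x = b and for all indices i, j: c_i/a_i > c_j/a_j and x_j > 0 imply x_i = 1. -/
private lemma sum_split_pair {n : ℕ} (i j : Fin n) (h : i ≠ j) (g : Fin n → ℝ) :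
    ∑ k, g k = g i + g j + ∑ k ∈ Finset.univ \ {i, j}, g k := by
  rw [← Finset.sum_sdiff (Finset.subset_univ {i,j}), Finset.sum_pair h]
  ring

private lemma sum_split_one {n : ℕ} (k : Fin n) (g : Fin n → ℝ) :
    ∑ i, g i = g k + ∑ i ∈ Finset.univ.erase k, g i :=
  (Finset.add_sum_erase _ g (Finset.mem_univ k)).symm

/-- Characterization of optimal solutions of the follower's continuous knapsack
problem: a feasible `x` is optimal iff it fills the capacity completely and is
greedy-consistent: whenever `cᵢ/aᵢ > cⱼ/aⱼ` and `xⱼ > 0`, then `xᵢ = 1`. -/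
theorem follower_optimal_iff
    (n : ℕ) (a c : Fin n → ℝ) (ha : ∀ i, 0 < a i) (hc : ∀ i, 0 < c i)
    (b : ℝ) (hb0 : 0 ≤ b) (hb1 : b ≤ ∑ i, a i)
    (x : Fin n → ℝ)
    (hfeas : (∑ i, a i * x i) ≤ b ∧ ∀ i, 0 ≤ x i ∧ x i ≤ 1) :
    (∀ y : Fin n → ℝ,
        ((∑ i, a i * y i) ≤ b ∧ ∀ i, 0 ≤ y i ∧ y i ≤ 1) →
        ∑ i, c i * y i ≤ ∑ i, c i * x i) ↔
    ((∑ i, a i * x i) = b ∧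
      ∀ i j : Fin n, c j / a j < c i / a i → 0 < x j → x i = 1) := by
  obtain ⟨hxb, hx01⟩ := hfeas
  constructor
  · intro hopt
    constructor
    · -- saturation
      by_contra hne
      have hlt : ∑ i, a i * x i < b := lt_of_le_of_ne hxb hne
      have hex : ∃ k, x k < 1 := by
        by_contra h
        push_neg at h
        have : ∑ i, a i * x i = ∑ i, a i := by
          apply Finset.sum_congr rfl
          intro i _
          rw [le_antisymm (hx01 i).2 (h i), mul_one]
        linarith
      obtain ⟨k, hk⟩ := hex
      set ε := min (1 - x k) ((b - ∑ i, a i * x i) / a k) with hεdef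
      have hε0 : 0 < ε := lt_min (by linarith) (div_pos (by linarith) (ha k))
      have hε1 : ε ≤ 1 - x k := min_le_left _ _
      have hε2 : ε ≤ (b - ∑ i, a i * x i) / a k := min_le_right _ _
      set y : Fin n → ℝ := fun i => if i = k then x k + ε else x i with hydef
      have hyk : y k = x k + ε := by simp [hydef]
      have hyo : ∀ i, i ≠ k → y i = x i := by intro i hi; simp [hydef, hi]
      have hsum : ∀ g : Fin n → ℝ,
          ∑ i, g i * y i = g k * (x k + ε) + ∑ i ∈ Finset.univ.erase k, g i * x i := by
        intro g
        rw [sum_split_one k (fun i => g i * y i), hyk]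
        congr 1
        apply Finset.sum_congr rfl
        intro i hi
        rw [hyo i (Finset.mem_erase.mp hi).1]
      have hax : ∑ i, a i * x i = a k * x k + ∑ i ∈ Finset.univ.erase k, a i * x i :=
        sum_split_one k _
      have hcx : ∑ i, c i * x i = c k * x k + ∑ i ∈ Finset.univ.erase k, c i * x i :=
        sum_split_one k _
      have hfy : (∑ i, a i * y i) ≤ b ∧ ∀ i, 0 ≤ y i ∧ y i ≤ 1 := by
        constructor
        · rw [hsum a]
          have h1 : a k * ε ≤ b - ∑ i, a i * x i := (le_div_iff₀' (ha k)).mp hε2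
          have h2 : a k * (x k + ε) = a k * x k + a k * ε := by ring
          linarith [hax]
        · intro i
          by_cases hi : i = k
          · rw [hi, hyk]
            constructor
            · linarith [(hx01 k).1]
            · linarith
          · rw [hyo i hi]; exact hx01 i
      have hle := hopt y hfy
      rw [hsum c] at hle
      have h3 : c k * (x k + ε) = c k * x k + c k * ε := by ring
      nlinarith [mul_pos (hc k) hε0, hcx]
    · -- greedy consistency
      intro i j hij hxj
      by_contra hne
      have hxi : x i < 1 := lt_of_le_of_ne (hx01 i).2 hne
      have hij' : i ≠ j := by rintro rfl; exact lt_irrefl _ hij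
      set δ := min (x j) ((1 - x i) * a i / a j) with hδdef
      have hδ0 : 0 < δ :=
        lt_min hxj (div_pos (mul_pos (by linarith) (ha i)) (ha j))
      have hδ1 : δ ≤ x j := min_le_left _ _
      have hδ2 : δ * a j / a i ≤ 1 - x i := by
        have h2 : δ ≤ (1 - x i) * a i / a j := min_le_right _ _
        rw [div_le_iff₀ (ha i)]
        calc δ * a j ≤ ((1 - x i) * a i / a j) * a j :=
              mul_le_mul_of_nonneg_right h2 (ha j).le
          _ = (1 - x i) * a i := div_mul_cancel₀ _ (ha j).ne'
      set y : Fin n → ℝ := fun k =>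
        if k = i then x i + δ * a j / a i else if k = j then x j - δ else x k with hydef
      have hyi : y i = x i + δ * a j / a i := by simp [hydef]
      have hyj : y j = x j - δ := by simp [hydef, hij'.symm, if_neg hij'.symm]
      have hyo : ∀ k, k ≠ i → k ≠ j → y k = x k := by
        intro k h1 h2; simp [hydef, h1, h2]
      have hsum : ∀ g : Fin n → ℝ,
          ∑ k, g k * y k = g i * y i + g j * y j +
            ∑ k ∈ Finset.univ \ {i, j}, g k * x k := by
        intro g
        rw [sum_split_pair i j hij' (fun k => g k * y k)]
        congr 1
        apply Finset.sum_congr rfl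
        intro k hk
        simp only [Finset.mem_sdiff, Finset.mem_insert, Finset.mem_singleton] at hk
        push_neg at hk
        rw [hyo k hk.2.1 hk.2.2]
      have hax : ∑ k, a k * x k = a i * x i + a j * x j +
          ∑ k ∈ Finset.univ \ {i, j}, a k * x k := sum_split_pair i j hij' _
      have hcx : ∑ k, c k * x k = c i * x i + c j * x j +
          ∑ k ∈ Finset.univ \ {i, j}, c k * x k := sum_split_pair i j hij' _
      have hkey : a i * (δ * a j / a i) = δ * a j := by
        rw [mul_comm (a i), div_mul_cancel₀ _ (ha i).ne']
      have hδaj : 0 ≤ δ * a j / a i :=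
        div_nonneg (mul_nonneg hδ0.le (ha j).le) (ha i).le
      have hfy : (∑ k, a k * y k) ≤ b ∧ ∀ k, 0 ≤ y k ∧ y k ≤ 1 := by
        constructor
        · rw [hsum a, hyi, hyj]
          have ea : a i * (x i + δ * a j / a i) =
              a i * x i + a i * (δ * a j / a i) := by ring
          have eb : a j * (x j - δ) = a j * x j - a j * δ := by ring
          have hcm : δ * a j = a j * δ := mul_comm _ _
          linarith [hax, hxb]
        · intro k
          by_cases h1 : k = i
          · rw [h1, hyi]
            constructor
            · linarith [(hx01 i).1]
            · linarith
          · by_cases h2 : k = j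
            · rw [h2, hyj]
              constructor
              · linarith
              · linarith [(hx01 j).2, hδ0]
            · rw [hyo k h1 h2]; exact hx01 k
      have hle := hopt y hfy
      rw [hsum c, hyi, hyj] at hle
      have e1 : c i * (x i + δ * a j / a i) =
          c i * x i + δ * a j * (c i / a i) := by
        field_simp
      have haj : a j * (c j / a j) = c j := by
        rw [mul_comm, div_mul_cancel₀ _ (ha j).ne']
      have e2' : δ * a j * (c j / a j) = δ * c j := by rw [mul_assoc, haj]
      have e2 : c j * (x j - δ) = c j * x j - δ * a j * (c j / a j) := by
        rw [e2']; ring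
      have hpos : 0 < δ * a j := mul_pos hδ0 (ha j)
      have hstrict := mul_lt_mul_of_pos_left hij hpos
      linarith [hcx, hle, e1, e2, hstrict]
  · rintro ⟨hxb', hgreedy⟩ y ⟨hyb, hy01⟩
    set S : Finset (Fin n) := Finset.univ.filter (fun j => 0 < x j) with hSdef
    by_cases hS : S.Nonempty
    · obtain ⟨j0, hj0S, hj0⟩ := Finset.exists_mem_eq_inf' hS (fun j => c j / a j)
      have hxj0 : 0 < x j0 := (Finset.mem_filter.mp hj0S).2
      have hr0 : 0 < c j0 / a j0 := div_pos (hc j0) (ha j0)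
      have hrle : ∀ k, 0 < x k → c j0 / a j0 ≤ c k / a k := by
        intro k hk
        rw [← hj0]
        exact Finset.inf'_le _ (Finset.mem_filter.mpr ⟨Finset.mem_univ k, hk⟩)
      have hrge : ∀ k, x k < 1 → c k / a k ≤ c j0 / a j0 := by
        intro k hk
        by_contra h
        push_neg at h
        exact absurd (hgreedy k j0 h hxj0) (ne_of_lt hk)
      have hpt : ∀ k, c j0 / a j0 * (a k * (x k - y k)) ≤ c k * (x k - y k) := by
        intro k
        rcases lt_trichotomy (x k) (y k) with h | h | h
        · have hk1 : x k < 1 := lt_of_lt_of_le h (hy01 k).2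
          have h' := hrge k hk1
          have hck : c k ≤ c j0 / a j0 * a k := by
            rw [div_le_iff₀ (ha k)] at h'; linarith
          nlinarith
        · rw [h]; simp
        · have hk0 : 0 < x k := lt_of_le_of_lt (hy01 k).1 h
          have h' := hrle k hk0
          have hck : c j0 / a j0 * a k ≤ c k := by
            rw [le_div_iff₀ (ha k)] at h'; linarith
          nlinarith
      have hsumle : c j0 / a j0 * ((∑ k, a k * x k) - ∑ k, a k * y k) ≤
          (∑ k, c k * x k) - ∑ k, c k * y k := by
        calc c j0 / a j0 * ((∑ k, a k * x k) - ∑ k, a k * y k)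
            = ∑ k, c j0 / a j0 * (a k * (x k - y k)) := by
              rw [← Finset.sum_sub_distrib, Finset.mul_sum]
              apply Finset.sum_congr rfl; intro k _; ring
          _ ≤ ∑ k, c k * (x k - y k) := Finset.sum_le_sum (fun k _ => hpt k)
          _ = (∑ k, c k * x k) - ∑ k, c k * y k := by
              rw [← Finset.sum_sub_distrib]
              apply Finset.sum_congr rfl; intro k _; ring
      have hynn : ∑ k, a k * y k ≤ ∑ k, a k * x k := by rw [hxb']; exact hyb
      nlinarith [mul_nonneg hr0.le (sub_nonneg.mpr hynn)]
    · -- x = 0, hence b = 0, hence y = 0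
      have hx0 : ∀ k, x k = 0 := by
        intro k
        by_contra h
        exact hS ⟨k, Finset.mem_filter.mpr ⟨Finset.mem_univ k,
          lt_of_le_of_ne (hx01 k).1 (Ne.symm h)⟩⟩
      have hb' : b = 0 := by
        have hz : ∑ i, a i * x i = 0 :=
          Finset.sum_eq_zero (fun k _ => by rw [hx0 k, mul_zero])
        rw [← hxb', hz]
      have hy0 : ∀ k, y k = 0 := by
        have hterms : ∀ k ∈ Finset.univ, 0 ≤ a k * y k :=
          fun k _ => mul_nonneg (ha k).le (hy01 k).1
        have hzero : ∑ k, a k * y k = 0 :=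
          le_antisymm (hb' ▸ hyb) (Finset.sum_nonneg hterms)
        intro k
        have := (Finset.sum_eq_zero_iff_of_nonneg hterms).mp hzero k (Finset.mem_univ k)
        exact (mul_eq_zero.mp this).elim (fun h => absurd h (ha k).ne') id
      have hcy : ∑ k, c k * y k = 0 := by
        apply Finset.sum_eq_zero; intro k _; rw [hy0 k, mul_zero]
      rw [hcy]
      apply Finset.sum_nonneg
      intro k _
      exact mul_nonneg (hc k).le (hx01 k).1
end

section
/- Let a ∈ ℝ^n with a_i > 0, and let c⁻, c⁺ ∈ ℝ^n with 0 < c_i⁻ ≤ c_i⁺ for all i. For a linear order ⪯ on {1,…,n}, the following are equivalent: (1) there exists c ∈ ℝ^n with c_i⁻ ≤ c_i ≤ c_i⁺ for all i such that i ⪯ j implies c_i/a_i ≥ c_j/a_j; (2) ⪯ is a linear extension of the interval order P, i.e., c_i⁻/a_i > c_j⁺/a_j implies i ≺ j (i ⪯ j and i ≠ j). -/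
/-- The possible sortings of the items by decreasing profit-to-size ratio, over
all profit vectors `c` in the box `[c⁻, c⁺]`, are exactly the linear extensions
of the interval order `P` defined by `i <_P j ↔ cᵢ⁻/aᵢ > cⱼ⁺/aⱼ`. -/
theorem sortings_are_linear_extensions_of_interval_order
    (n : ℕ) (a cm cp : Fin n → ℝ) (ha : ∀ i, 0 < a i)
    (hcm : ∀ i, 0 < cm i) (hcmcp : ∀ i, cm i ≤ cp i)
    (r : Fin n → Fin n → Prop) (hr : IsLinearOrder (Fin n) r) :
    (∃ c : Fin n → ℝ, (∀ i, cm i ≤ c i ∧ c i ≤ cp i) ∧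
        ∀ i j : Fin n, r i j → c j / a j ≤ c i / a i) ↔
    (∀ i j : Fin n, cp j / a j < cm i / a i → r i j ∧ i ≠ j) := by
  classical
  haveI := hr
  constructor
  · rintro ⟨c, hc, hmono⟩ i j hij
    have h1 : c j / a j ≤ cp j / a j := (div_le_div_iff_of_pos_right (ha j)).mpr (hc j).2
    have h2 : cm i / a i ≤ c i / a i := (div_le_div_iff_of_pos_right (ha i)).mpr (hc i).1
    have hlt : c j / a j < c i / a i := lt_of_le_of_lt h1 (lt_of_lt_of_le hij h2)
    constructor
    · rcases total_of r i j with h | h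
      · exact h
      · exact absurd (hmono j i h) (not_le.mpr hlt)
    · rintro rfl; exact lt_irrefl _ hlt
  · intro hP
    have hne : ∀ i : Fin n, (Finset.univ.filter (fun k => r k i)).Nonempty :=
      fun i => ⟨i, by simp [refl_of r]⟩
    set q : Fin n → ℝ := fun i =>
      (Finset.univ.filter (fun k => r k i)).inf' (hne i) (fun k => cp k / a k) with hq
    have hql : ∀ i, cm i / a i ≤ q i := by
      intro i
      apply Finset.le_inf'
      intro k hk
      simp only [Finset.mem_filter] at hk
      by_contra hlt
      push_neg at hlt
      obtain ⟨hrik, hik⟩ := hP i k hlt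
      exact hik (antisymm_of r hrik hk.2)
    have hqu : ∀ i, q i ≤ cp i / a i :=
      fun i => Finset.inf'_le _ (by simp [refl_of r])
    have hmono : ∀ i j, r i j → q j ≤ q i := by
      intro i j hij
      apply Finset.le_inf'
      intro k hk
      simp only [Finset.mem_filter] at hk
      exact Finset.inf'_le _ (by simp [trans_of r hk.2 hij])
    refine ⟨fun i => q i * a i, fun i => ?_, fun i j hij => ?_⟩
    · constructor
      · have := hql i
        rwa [div_le_iff₀ (ha i)] at this
      · have := hqu i
        rwa [le_div_iff₀ (ha i)] at this
    · simp only [mul_div_assoc, div_self (ne_of_gt (ha i)), div_self (ne_of_gt (ha j)), mul_one]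
      exact hmono i j hij
end

section
/- Let a, d ∈ ℝ^n with a_i > 0 for all i, let 0 < c⁻ ≤ c⁺ componentwise with c⁻, c⁺ ∈ ℝ^n, let U := [c_1⁻,c_1⁺] × … × [c_n⁻,c_n⁺], and let 0 ≤ b ≤ Σ_{i=1}^n a_i. Let P be the interval order defined by i <_P j iff c_i⁻/a_i > c_j⁺/a_j. Then min over c ∈ U of min{ d^T x : x an optimal solution of (max c^T x s.t. a^T x ≤ b, 0 ≤ x ≤ 1) } equals min{ d^T x^F : F a fractional prefix of P or F = ∅, with a^T x^F = b }. -/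
/-- Feasibility for the follower's continuous knapsack problem. -/
def feasibleKP {n : ℕ} (a : Fin n → ℝ) (b : ℝ) (x : Fin n → ℝ) : Prop :=
  (∑ i, a i * x i) ≤ b ∧ ∀ i, 0 ≤ x i ∧ x i ≤ 1

/-- Optimality for the follower's continuous knapsack problem with profits `c`. -/
def optimalKP {n : ℕ} (a c : Fin n → ℝ) (b : ℝ) (x : Fin n → ℝ) : Prop :=
  feasibleKP a b x ∧ ∀ y, feasibleKP a b y → ∑ i, c i * y i ≤ ∑ i, c i * x i

/-- The vector associated with a fractional prefix `(J, j, λ)`. -/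
def fracVec {n : ℕ} (J : Finset (Fin n)) (j : Fin n) (lam : ℝ) : Fin n → ℝ :=
  fun i => if i = j then lam else if i ∈ J then 1 else 0

open Finset
open scoped Classical

lemma fracVec_sum {n : ℕ} (J : Finset (Fin n)) (j : Fin n) (lam : ℝ)
    (w : Fin n → ℝ) :
    ∑ i, w i * fracVec J j lam i = w j * lam + ∑ i ∈ J.erase j, w i := by
  classical
  rw [← Finset.add_sum_erase _ _ (Finset.mem_univ j)]
  congr 1
  · simp [fracVec]
  · rw [Finset.sum_congr rfl (g := fun i => if i ∈ J then w i else 0)]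
    · rw [Finset.sum_ite_mem, Finset.sum_congr]
      · ext i; simp [Finset.mem_erase, and_comm]
      · intro i _; rfl
    · intro i hi
      simp only [Finset.mem_erase] at hi
      simp [fracVec, hi.1]
lemma optimal_of_threshold {n : ℕ} (a c : Fin n → ℝ) (b t : ℝ) (ht : 0 ≤ t)
    (x : Fin n → ℝ) (hfeas : feasibleKP a b x) (htight : ∑ i, a i * x i = b)
    (hkkt : ∀ i, (x i < 1 → c i ≤ t * a i) ∧ (0 < x i → t * a i ≤ c i)) :
    optimalKP a c b x := by
  refine ⟨hfeas, fun y hy => ?_⟩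
  have key : ∑ i, c i * y i - ∑ i, c i * x i =
      (∑ i, (c i - t * a i) * (y i - x i)) + t * ((∑ i, a i * y i) - (∑ i, a i * x i)) := by
    rw [← Finset.sum_sub_distrib, mul_sub, Finset.mul_sum, Finset.mul_sum,
      ← Finset.sum_sub_distrib, ← Finset.sum_add_distrib]
    exact Finset.sum_congr rfl fun i _ => by ring
  have h1 : ∑ i, (c i - t * a i) * (y i - x i) ≤ 0 := by
    apply Finset.sum_nonpos
    intro i _
    rcases eq_or_lt_of_le (hfeas.2 i).1 with h0 | h0
    · have h2 := (hkkt i).1 (by rw [← h0]; norm_num)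
      nlinarith [(hy.2 i).1]
    · rcases eq_or_lt_of_le (hfeas.2 i).2 with h1 | h1
      · have h2 := (hkkt i).2 h0
        nlinarith [(hy.2 i).2]
      · have h2 := (hkkt i).1 h1
        have h3 := (hkkt i).2 h0
        have h4 : c i - t * a i = 0 := by linarith
        rw [h4, zero_mul]
  have h2 : t * ((∑ i, a i * y i) - (∑ i, a i * x i)) ≤ 0 := by
    have := hy.1
    rw [htight]
    nlinarith
  linarith [key, h1, h2]

lemma exists_optimal {n : ℕ} (a c : Fin n → ℝ) (b : ℝ) (hb0 : 0 ≤ b) :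
    ∃ x, optimalKP a c b x := by
  have hcomp : IsCompact {x : Fin n → ℝ | feasibleKP a b x} := by
    have h1 : {x : Fin n → ℝ | feasibleKP a b x} =
        {x | (∑ i, a i * x i) ≤ b} ∩ Set.Icc 0 1 := by
      ext x
      simp only [feasibleKP, Set.mem_setOf_eq, Set.mem_inter_iff, Set.mem_Icc]
      constructor
      · rintro ⟨h1, h2⟩
        exact ⟨h1, fun i => (h2 i).1, fun i => (h2 i).2⟩
      · rintro ⟨h1, h2, h3⟩
        exact ⟨h1, fun i => ⟨h2 i, h3 i⟩⟩
    rw [h1]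
    apply IsCompact.inter_left isCompact_Icc
    exact isClosed_le (by continuity) continuous_const
  have hne : Set.Nonempty {x : Fin n → ℝ | feasibleKP a b x} := by
    exact ⟨0, by simp [feasibleKP, hb0]⟩
  obtain ⟨x, hx, hmax⟩ := hcomp.exists_isMaxOn hne
    (Continuous.continuousOn (by continuity : Continuous fun x : Fin n → ℝ => ∑ i, c i * x i))
  exact ⟨x, hx, fun y hy => hmax hy⟩
lemma sum_perturb {n : ℕ} (w x : Fin n → ℝ) (i k : Fin n) (p q : ℝ) :
    ∑ j, w j * (x j + (if j = i then p else 0) - (if j = k then q else 0)) =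
      (∑ j, w j * x j) + w i * p - w k * q := by
  simp [mul_add, mul_sub, Finset.sum_add_distrib, Finset.sum_sub_distrib, mul_ite,
    Finset.sum_ite_eq', mul_zero]

lemma tightKP {n : ℕ} {a c : Fin n → ℝ} (ha : ∀ i, 0 < a i) (hc : ∀ i, 0 < c i)
    {b : ℝ} (hb1 : b ≤ ∑ i, a i) {x : Fin n → ℝ} (hx : optimalKP a c b x) :
    ∑ i, a i * x i = b := by
  by_contra h
  have hlt : ∑ i, a i * x i < b := lt_of_le_of_ne hx.1.1 h
  have hex : ∃ i, x i < 1 := by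
    by_contra hall
    push_neg at hall
    have : ∑ i, a i * x i = ∑ i, a i := by
      apply Finset.sum_congr rfl
      intro i _
      have : x i = 1 := le_antisymm (hx.1.2 i).2 (hall i)
      rw [this, mul_one]
    linarith
  obtain ⟨i, hi⟩ := hex
  set ε := min (1 - x i) ((b - ∑ j, a j * x j) / a i) with hε
  have hεpos : 0 < ε := lt_min (by linarith) (div_pos (by linarith) (ha i))
  have hε1 : ε ≤ 1 - x i := min_le_left _ _
  have hε2 : ε ≤ (b - ∑ j, a j * x j) / a i := min_le_right _ _
  set y : Fin n → ℝ := fun j => x j + (if j = i then ε else 0) - (if j = i then 0 else 0)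
    with hy
  have hyi : y i = x i + ε := by simp [hy]
  have hyo : ∀ j, j ≠ i → y j = x j := by intro j hj; simp [hy, hj]
  have hsum : ∑ j, a j * y j = (∑ j, a j * x j) + a i * ε := by
    rw [hy, sum_perturb]; ring
  have hcsum : ∑ j, c j * y j = (∑ j, c j * x j) + c i * ε := by
    rw [hy, sum_perturb]; ring
  have hyfeas : feasibleKP a b y := by
    constructor
    · rw [hsum]
      rw [le_div_iff₀ (ha i)] at hε2
      nlinarith
    · intro j
      rcases eq_or_ne j i with rfl | hj
      · rw [hyi]
        have := (hx.1.2 j).1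
        constructor <;> linarith
      · rw [hyo j hj]; exact hx.1.2 j
  have := hx.2 y hyfeas
  rw [hcsum] at this
  nlinarith [mul_pos (hc i) hεpos]

lemma exchangeKP {n : ℕ} {a c : Fin n → ℝ} (ha : ∀ i, 0 < a i) {b : ℝ}
    {x : Fin n → ℝ} (hx : optimalKP a c b x) {i k : Fin n} (hik : i ≠ k)
    (hi : x i < 1) (hk : 0 < x k) : c i * a k ≤ c k * a i := by
  by_contra h
  push_neg at h
  set ε := min ((1 - x i) * a i) (x k * a k) with hε
  have hεpos : 0 < ε :=
    lt_min (mul_pos (by linarith) (ha i)) (mul_pos hk (ha k))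
  set y : Fin n → ℝ := fun j => x j + (if j = i then ε / a i else 0) -
      (if j = k then ε / a k else 0) with hy
  have hyi : y i = x i + ε / a i := by simp [hy, hik]
  have hyk : y k = x k - ε / a k := by simp [hy, hik.symm]
  have hyo : ∀ j, j ≠ i → j ≠ k → y j = x j := by intro j h1 h2; simp [hy, h1, h2]
  have hdi : ε / a i ≤ 1 - x i := by
    rw [div_le_iff₀ (ha i)]; exact min_le_left _ _
  have hdk : ε / a k ≤ x k := by
    rw [div_le_iff₀ (ha k)]; exact min_le_right _ _
  have hcanc : ∀ m : Fin n, a m * (ε / a m) = ε := by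
    intro m; rw [mul_comm, div_mul_cancel₀ _ (ne_of_gt (ha m))]
  have hsum : ∑ j, a j * y j = ∑ j, a j * x j := by
    rw [hy, sum_perturb, hcanc, hcanc]; ring
  have hcsum : ∑ j, c j * y j = (∑ j, c j * x j) + c i * (ε / a i) - c k * (ε / a k) := by
    rw [hy, sum_perturb]
  have hyfeas : feasibleKP a b y := by
    constructor
    · rw [hsum]; exact hx.1.1
    · intro j
      rcases eq_or_ne j i with rfl | hji
      · rw [hyi]
        have h0 := (hx.1.2 j).1
        have hd0 : 0 < ε / a j := div_pos hεpos (ha j)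
        constructor <;> linarith
      rcases eq_or_ne j k with rfl | hjk
      · rw [hyk]
        have h0 := (hx.1.2 j).2
        have hd0 : 0 < ε / a j := div_pos hεpos (ha j)
        constructor <;> linarith
      · rw [hyo j hji hjk]; exact hx.1.2 j
  have hopt := hx.2 y hyfeas
  rw [hcsum] at hopt
  have : c k * (ε / a k) < c i * (ε / a i) := by
    rw [mul_div_assoc', mul_div_assoc', div_lt_div_iff₀ (ha k) (ha i)]
    nlinarith
  linarith
lemma stepKP {n : ℕ} {a c : Fin n → ℝ} (d : Fin n → ℝ) (ha : ∀ i, 0 < a i) {b : ℝ}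
    {x : Fin n → ℝ} (hx : optimalKP a c b x) {i k : Fin n} (hik : i ≠ k)
    (hfi : 0 < x i ∧ x i < 1) (hfk : 0 < x k ∧ x k < 1) (hd : d i * a k ≤ d k * a i) :
    ∃ y, optimalKP a c b y ∧ (∑ j, a j * y j = ∑ j, a j * x j) ∧
      (∑ j, d j * y j ≤ ∑ j, d j * x j) ∧
      (Finset.univ.filter (fun m => 0 < y m ∧ y m < 1)) ⊂
        (Finset.univ.filter (fun m => 0 < x m ∧ x m < 1)) := by
  have hcc : c i * a k = c k * a i :=
    le_antisymm (exchangeKP ha hx hik hfi.2 hfk.1)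
      (exchangeKP ha hx hik.symm hfk.2 hfi.1)
  set ε := min ((1 - x i) * a i) (x k * a k) with hε
  have hεpos : 0 < ε :=
    lt_min (mul_pos (by linarith [hfi.2]) (ha i)) (mul_pos hfk.1 (ha k))
  set y : Fin n → ℝ := fun j => x j + (if j = i then ε / a i else 0) -
      (if j = k then ε / a k else 0) with hy
  have hyi : y i = x i + ε / a i := by simp [hy, hik]
  have hyk : y k = x k - ε / a k := by simp [hy, hik.symm]
  have hyo : ∀ j, j ≠ i → j ≠ k → y j = x j := by intro j h1 h2; simp [hy, h1, h2]
  have hdi : ε / a i ≤ 1 - x i := by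
    rw [div_le_iff₀ (ha i)]; exact min_le_left _ _
  have hdk : ε / a k ≤ x k := by
    rw [div_le_iff₀ (ha k)]; exact min_le_right _ _
  have hdi0 : 0 < ε / a i := div_pos hεpos (ha i)
  have hdk0 : 0 < ε / a k := div_pos hεpos (ha k)
  have hcanc : ∀ m : Fin n, a m * (ε / a m) = ε := by
    intro m; rw [mul_comm, div_mul_cancel₀ _ (ne_of_gt (ha m))]
  have hsum : ∑ j, a j * y j = ∑ j, a j * x j := by
    rw [hy, sum_perturb, hcanc, hcanc]; ring
  have hcsum : ∑ j, c j * y j = ∑ j, c j * x j := by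
    rw [hy, sum_perturb]
    have : c i * (ε / a i) = c k * (ε / a k) := by
      rw [mul_div_assoc', mul_div_assoc', div_eq_div_iff (ne_of_gt (ha i)) (ne_of_gt (ha k))]
      linear_combination ε * hcc
    rw [this]; ring
  have hdsum : ∑ j, d j * y j ≤ ∑ j, d j * x j := by
    rw [hy, sum_perturb]
    have : d i * (ε / a i) ≤ d k * (ε / a k) := by
      rw [mul_div_assoc', mul_div_assoc', div_le_div_iff₀ (ha i) (ha k)]
      nlinarith
    linarith
  have hyfeas : feasibleKP a b y := by
    constructor
    · rw [hsum]; exact hx.1.1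
    · intro j
      rcases eq_or_ne j i with rfl | hji
      · rw [hyi]
        have h0 := (hx.1.2 j).1
        constructor <;> linarith
      rcases eq_or_ne j k with rfl | hjk
      · rw [hyk]
        have h0 := (hx.1.2 j).2
        constructor <;> linarith
      · rw [hyo j hji hjk]; exact hx.1.2 j
  have hyopt : optimalKP a c b y := ⟨hyfeas, fun z hz => (hx.2 z hz).trans_eq hcsum.symm⟩
  refine ⟨y, hyopt, hsum, hdsum, ?_⟩
  have hsub : (Finset.univ.filter (fun m => 0 < y m ∧ y m < 1)) ⊆
      (Finset.univ.filter (fun m => 0 < x m ∧ x m < 1)) := by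
    intro m hm
    rcases eq_or_ne m i with rfl | hmi
    · simp [hfi]
    rcases eq_or_ne m k with rfl | hmk
    · simp [hfk]
    · simp only [Finset.mem_filter, Finset.mem_univ, true_and] at hm ⊢
      rwa [hyo m hmi hmk] at hm
  rw [Finset.ssubset_iff_of_subset hsub]
  rcases min_cases ((1 - x i) * a i) (x k * a k) with ⟨he, _⟩ | ⟨he, _⟩
  · refine ⟨i, by simp [hfi], ?_⟩
    have : y i = 1 := by
      rw [hyi, hε, he, mul_div_assoc, div_self (ne_of_gt (ha i))]; ring
    simp [this]
  · refine ⟨k, by simp [hfk], ?_⟩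
    have : y k = 0 := by
      rw [hyk, hε, he, mul_div_assoc, div_self (ne_of_gt (ha k))]; ring
    simp [this]

lemma reduceKP {n : ℕ} {a c : Fin n → ℝ} (d : Fin n → ℝ) (ha : ∀ i, 0 < a i) {b : ℝ} :
    ∀ (m : ℕ) (x : Fin n → ℝ), optimalKP a c b x →
      (Finset.univ.filter (fun j => 0 < x j ∧ x j < 1)).card ≤ m →
      ∃ y, optimalKP a c b y ∧ (∑ j, a j * y j = ∑ j, a j * x j) ∧
        (∑ j, d j * y j ≤ ∑ j, d j * x j) ∧
        (Finset.univ.filter (fun j => 0 < y j ∧ y j < 1)).card ≤ 1 := by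
  intro m
  induction m with
  | zero =>
    intro x hx hcard
    exact ⟨x, hx, rfl, le_refl _, le_trans hcard (by norm_num)⟩
  | succ m ih =>
    intro x hx hcard
    by_cases h1 : (Finset.univ.filter (fun j => 0 < x j ∧ x j < 1)).card ≤ 1
    · exact ⟨x, hx, rfl, le_refl _, h1⟩
    · have h2 : 1 < (Finset.univ.filter (fun j => 0 < x j ∧ x j < 1)).card :=
        lt_of_not_ge h1
      obtain ⟨i, hi, k, hk, hik⟩ := Finset.one_lt_card.mp h2
      simp only [Finset.mem_filter, Finset.mem_univ, true_and] at hi hk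
      have hmain : ∀ i' k' : Fin n, i' ≠ k' → (0 < x i' ∧ x i' < 1) →
          (0 < x k' ∧ x k' < 1) → d i' * a k' ≤ d k' * a i' →
          ∃ y, optimalKP a c b y ∧ (∑ j, a j * y j = ∑ j, a j * x j) ∧
            (∑ j, d j * y j ≤ ∑ j, d j * x j) ∧
            (Finset.univ.filter (fun j => 0 < y j ∧ y j < 1)).card ≤ 1 := by
        intro i' k' hik' hfi' hfk' hd'
        obtain ⟨y, hy1, hy2, hy3, hy4⟩ := stepKP d ha hx hik' hfi' hfk' hd'
        have hcy : (Finset.univ.filter (fun j => 0 < y j ∧ y j < 1)).card ≤ m := by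
          have := Finset.card_lt_card hy4
          omega
        obtain ⟨z, hz1, hz2, hz3, hz4⟩ := ih y hy1 hcy
        exact ⟨z, hz1, hz2.trans hy2, hz3.trans hy3, hz4⟩
      rcases le_total (d i * a k) (d k * a i) with hd | hd
      · exact hmain i k hik hi hk hd
      · exact hmain k i hik.symm hk hi hd
lemma prefix_of_optimal {n : ℕ} {a c cm cp : Fin n → ℝ}
    (ha : ∀ i, 0 < a i) (hcmcp : ∀ i, cm i ≤ cp i)
    (hc : ∀ i, cm i ≤ c i ∧ c i ≤ cp i) {b : ℝ} (hb : 0 < b)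
    {y : Fin n → ℝ} (hy : optimalKP a c b y) (htight : ∑ i, a i * y i = b)
    (hcard : (Finset.univ.filter (fun i => 0 < y i ∧ y i < 1)).card ≤ 1) :
    ∃ (J : Finset (Fin n)) (j : Fin n) (lam : ℝ),
      J.Nonempty ∧ j ∈ J ∧
      (∀ k ∈ J, ∀ i : Fin n, cp k / a k < cm i / a i → i ∈ J) ∧
      (∀ i ∈ J, ¬ (cp i / a i < cm j / a j)) ∧
      0 < lam ∧ lam ≤ 1 ∧ fracVec J j lam = y := by
  set J : Finset (Fin n) := Finset.univ.filter (fun i => 0 < y i) with hJ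
  have hmemJ : ∀ i, i ∈ J ↔ 0 < y i := by
    intro i; simp [hJ]
  have hzero : ∀ i, i ∉ J → y i = 0 := by
    intro i hi
    rw [hmemJ] at hi
    push_neg at hi
    exact le_antisymm hi (hy.1.2 i).1
  have hJne : J.Nonempty := by
    by_contra hne
    rw [Finset.not_nonempty_iff_eq_empty] at hne
    have : ∑ i, a i * y i = 0 := by
      apply Finset.sum_eq_zero
      intro i _
      rw [hzero i (by simp [hne]), mul_zero]
    linarith
  have hlow : ∀ k ∈ J, ∀ i : Fin n, cp k / a k < cm i / a i → i ∈ J := by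
    intro k hk i hdiv
    by_contra hiJ
    have hyi : y i = 0 := hzero i hiJ
    have hyk : 0 < y k := (hmemJ k).mp hk
    have hik : i ≠ k := by rintro rfl; rw [hyi] at hyk; linarith
    have hex : c i * a k ≤ c k * a i :=
      exchangeKP ha hy hik (by rw [hyi]; norm_num) hyk
    rw [div_lt_div_iff₀ (ha k) (ha i)] at hdiv
    have h1 : cm i * a k ≤ c i * a k :=
      mul_le_mul_of_nonneg_right (hc i).1 (le_of_lt (ha k))
    have h2 : c k * a i ≤ cp k * a i :=
      mul_le_mul_of_nonneg_right (hc k).2 (le_of_lt (ha i))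
    linarith
  by_cases hfr : ∃ j, 0 < y j ∧ y j < 1
  · obtain ⟨j, hj0, hj1⟩ := hfr
    have hjJ : j ∈ J := (hmemJ j).mpr hj0
    refine ⟨J, j, y j, hJne, hjJ, hlow, ?_, hj0, le_of_lt hj1, ?_⟩
    · intro i hiJ hdiv
      rw [div_lt_div_iff₀ (ha i) (ha j)] at hdiv
      rcases eq_or_ne i j with rfl | hij
      · nlinarith [mul_le_mul_of_nonneg_right (hcmcp i) (le_of_lt (ha i))]
      · have hex : c j * a i ≤ c i * a j :=
          exchangeKP ha hy (Ne.symm hij) hj1 ((hmemJ i).mp hiJ)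
        have h1 : cm j * a i ≤ c j * a i :=
          mul_le_mul_of_nonneg_right (hc j).1 (le_of_lt (ha i))
        have h2 : c i * a j ≤ cp i * a j :=
          mul_le_mul_of_nonneg_right (hc i).2 (le_of_lt (ha j))
        linarith
    · funext i
      rcases eq_or_ne i j with rfl | hij
      · simp [fracVec]
      rw [fracVec, if_neg hij]
      by_cases hiJ : i ∈ J
      · rw [if_pos hiJ]
        by_contra hne
        have hi1 : y i < 1 := lt_of_le_of_ne (hy.1.2 i).2 (fun h => hne h.symm)
        have hpair : ({i, j} : Finset (Fin n)) ⊆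
            Finset.univ.filter (fun m => 0 < y m ∧ y m < 1) := by
          intro m hm
          simp only [Finset.mem_insert, Finset.mem_singleton] at hm
          rcases hm with rfl | rfl
          · simp [((hmemJ m).mp hiJ), hi1]
          · simp [hj0, hj1]
        have := Finset.card_le_card hpair
        rw [Finset.card_pair hij] at this
        omega
      · rw [if_neg hiJ, hzero i hiJ]
  · push_neg at hfr
    have h01 : ∀ i, y i = 0 ∨ y i = 1 := by
      intro i
      rcases eq_or_lt_of_le (hy.1.2 i).1 with h | h
      · exact Or.inl h.symm
      · exact Or.inr (le_antisymm (hy.1.2 i).2 (hfr i h))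
    obtain ⟨j, hjJ, hjmin⟩ := Finset.exists_min_image J (fun k => c k / a k) hJne
    have hone : ∀ i ∈ J, y i = 1 := by
      intro i hiJ
      rcases h01 i with h | h
      · rw [hmemJ] at hiJ; linarith
      · exact h
    refine ⟨J, j, 1, hJne, hjJ, hlow, ?_, one_pos, le_refl _, ?_⟩
    · intro i hiJ hdiv
      rw [div_lt_div_iff₀ (ha i) (ha j)] at hdiv
      have hle := hjmin i hiJ
      rw [div_le_div_iff₀ (ha j) (ha i)] at hle
      have h1 : cm j * a i ≤ c j * a i :=
        mul_le_mul_of_nonneg_right (hc j).1 (le_of_lt (ha i))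
      have h2 : c i * a j ≤ cp i * a j :=
        mul_le_mul_of_nonneg_right (hc i).2 (le_of_lt (ha j))
      linarith
    · funext i
      rcases eq_or_ne i j with rfl | hij
      · rw [fracVec, if_pos rfl, hone i hjJ]
      rw [fracVec, if_neg hij]
      by_cases hiJ : i ∈ J
      · rw [if_pos hiJ, hone i hiJ]
      · rw [if_neg hiJ, hzero i hiJ]

lemma optimal_of_prefix {n : ℕ} {a cm cp : Fin n → ℝ}
    (ha : ∀ i, 0 < a i) (hcm : ∀ i, 0 < cm i) (hcmcp : ∀ i, cm i ≤ cp i)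
    {b : ℝ} {J : Finset (Fin n)} {j : Fin n} {lam : ℝ}
    (hjJ : j ∈ J)
    (hlow : ∀ k ∈ J, ∀ i : Fin n, cp k / a k < cm i / a i → i ∈ J)
    (hmax : ∀ i ∈ J, ¬ (cp i / a i < cm j / a j))
    (hlam0 : 0 < lam) (hlam1 : lam ≤ 1)
    (htight : ∑ i, a i * fracVec J j lam i = b) :
    ∃ c : Fin n → ℝ, (∀ i, cm i ≤ c i ∧ c i ≤ cp i) ∧
      optimalKP a c b (fracVec J j lam) := by
  obtain ⟨k0, hk0J, hk0min⟩ := Finset.exists_min_image J (fun k => cp k / a k) ⟨j, hjJ⟩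
  set t := cp k0 / a k0 with ht
  have htpos : 0 < t := div_pos (lt_of_lt_of_le (hcm k0) (hcmcp k0)) (ha k0)
  set c : Fin n → ℝ := fun i => max (cm i) (min (cp i) (t * a i)) with hcdef
  have hcbound : ∀ i, cm i ≤ c i ∧ c i ≤ cp i := by
    intro i
    exact ⟨le_max_left _ _, max_le (hcmcp i) (min_le_left _ _)⟩
  have hinJ : ∀ i ∈ J, t * a i ≤ c i := by
    intro i hiJ
    have h1 : t ≤ cp i / a i := hk0min i hiJ
    rw [le_div_iff₀ (ha i)] at h1
    have : min (cp i) (t * a i) = t * a i := min_eq_right h1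
    rw [hcdef]
    simp only [this]
    exact le_max_right _ _
  have hcj : c j = t * a j := by
    have h1 : t ≤ cp j / a j := hk0min j hjJ
    rw [le_div_iff₀ (ha j)] at h1
    have h2 : cm j ≤ t * a j := by
      have := hmax k0 hk0J
      push_neg at this
      rw [← ht, div_le_div_iff₀ (ha j) (ha k0)] at this
      rw [ht, div_mul_eq_mul_div, le_div_iff₀ (ha k0)]
      linarith
    rw [hcdef]
    simp only [min_eq_right h1]
    exact max_eq_right h2
  have houtJ : ∀ i, i ∉ J → c i ≤ t * a i := by
    intro i hiJ
    have h1 : ¬ (cp k0 / a k0 < cm i / a i) := fun h => hiJ (hlow k0 hk0J i h)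
    push_neg at h1
    rw [← ht] at h1
    have hcmi : cm i ≤ t * a i := (div_le_iff₀ (ha i)).mp h1
    exact max_le hcmi (min_le_right _ _)
  set x := fracVec J j lam with hx
  have hxval : ∀ i, x i = if i = j then lam else if i ∈ J then 1 else 0 := fun i => rfl
  have hfeas : feasibleKP a b x := by
    constructor
    · rw [htight]
    · intro i
      rw [hxval i]
      split
      · exact ⟨le_of_lt hlam0, hlam1⟩
      split
      · norm_num
      · norm_num
  refine ⟨c, hcbound, optimal_of_threshold a c b t (le_of_lt htpos) x hfeas htight ?_⟩
  intro i
  constructor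
  · intro hi1
    rcases eq_or_ne i j with rfl | hij
    · rw [hcj]
    · by_cases hiJ : i ∈ J
      · exfalso
        rw [hxval i, if_neg hij, if_pos hiJ] at hi1
        linarith
      · exact houtJ i hiJ
  · intro hi0
    by_cases hiJ : i ∈ J
    · exact hinJ i hiJ
    · exfalso
      rw [hxval i, if_neg ?_, if_neg hiJ] at hi0
      · linarith
      · rintro rfl; exact hiJ hjJ

/-- For interval uncertainty `U = [c⁻, c⁺]`, the adversary's problem
`min_{c ∈ U} min { dᵀx : x optimal for c }` has the same minimum as the problem
`min { dᵀ x^F : F a fractional prefix of the interval order P (or F = ∅) with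
aᵀ x^F = b }`, where `i <_P j ↔ cᵢ⁻/aᵢ > cⱼ⁺/aⱼ`. -/
theorem adversary_eq_fractional_prefix_min
    (n : ℕ) (a d cm cp : Fin n → ℝ) (ha : ∀ i, 0 < a i)
    (hcm : ∀ i, 0 < cm i) (hcmcp : ∀ i, cm i ≤ cp i)
    (b : ℝ) (hb0 : 0 ≤ b) (hb1 : b ≤ ∑ i, a i) :
    ∃ v : ℝ,
      IsLeast {v : ℝ | ∃ c x : Fin n → ℝ,
        (∀ i, cm i ≤ c i ∧ c i ≤ cp i) ∧ optimalKP a c b x ∧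
        v = ∑ i, d i * x i} v ∧
      IsLeast {v : ℝ | (b = 0 ∧ v = 0) ∨
        ∃ (J : Finset (Fin n)) (j : Fin n) (lam : ℝ),
          J.Nonempty ∧ j ∈ J ∧
          (∀ k ∈ J, ∀ i : Fin n, cp k / a k < cm i / a i → i ∈ J) ∧
          (∀ i ∈ J, ¬ (cp i / a i < cm j / a j)) ∧
          0 < lam ∧ lam ≤ 1 ∧
          (∑ i, a i * fracVec J j lam i) = b ∧
          v = ∑ i, d i * fracVec J j lam i} v := by
  classical
  set S2 : Set ℝ := {v : ℝ | (b = 0 ∧ v = 0) ∨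
        ∃ (J : Finset (Fin n)) (j : Fin n) (lam : ℝ),
          J.Nonempty ∧ j ∈ J ∧
          (∀ k ∈ J, ∀ i : Fin n, cp k / a k < cm i / a i → i ∈ J) ∧
          (∀ i ∈ J, ¬ (cp i / a i < cm j / a j)) ∧
          0 < lam ∧ lam ≤ 1 ∧
          (∑ i, a i * fracVec J j lam i) = b ∧
          v = ∑ i, d i * fracVec J j lam i} with hS2
  set g : Finset (Fin n) × Fin n → ℝ := fun p =>
    ∑ i, d i * fracVec p.1 p.2 ((b - ∑ i ∈ p.1.erase p.2, a i) / a p.2) i with hg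
  have hS2sub : S2 ⊆ insert (0 : ℝ) (Set.range g) := by
    intro v hv
    simp only [hS2, Set.mem_setOf_eq] at hv
    rcases hv with ⟨_, rfl⟩ | ⟨J, j, lam, _, _, _, _, _, _, hsum, rfl⟩
    · exact Set.mem_insert _ _
    · refine Set.mem_insert_iff.mpr (Or.inr ⟨(J, j), ?_⟩)
      have hfs := fracVec_sum J j lam a
      rw [hsum] at hfs
      have hlam : lam = (b - ∑ i ∈ J.erase j, a i) / a j := by
        rw [eq_div_iff (ne_of_gt (ha j))]
        linarith
      rw [hg]
      dsimp only
      rw [← hlam]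
  have hS2fin : S2.Finite :=
    Set.Finite.subset ((Set.finite_range g).insert 0) hS2sub
  -- an element of S2 obtained from an optimal solution
  have hfromOpt : ∀ (c x : Fin n → ℝ), (∀ i, cm i ≤ c i ∧ c i ≤ cp i) →
      optimalKP a c b x → 0 < b → ∃ w ∈ S2, w ≤ ∑ i, d i * x i := by
    intro c x hcU hxopt hbpos
    have hc : ∀ i, 0 < c i := fun i => lt_of_lt_of_le (hcm i) (hcU i).1
    have htight : ∑ i, a i * x i = b := tightKP ha hc hb1 hxopt
    obtain ⟨y, hyopt, hys, hyd, hycard⟩ :=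
      reduceKP d ha ((Finset.univ.filter (fun j => 0 < x j ∧ x j < 1)).card) x hxopt
        (le_refl _)
    have hytight : ∑ i, a i * y i = b := hys.trans htight
    obtain ⟨J, j, lam, hJne, hjJ, hlow, hmax, hl0, hl1, hfr⟩ :=
      prefix_of_optimal ha hcmcp hcU hbpos hyopt hytight hycard
    refine ⟨∑ i, d i * fracVec J j lam i, ?_, ?_⟩
    · simp only [hS2, Set.mem_setOf_eq]
      exact Or.inr ⟨J, j, lam, hJne, hjJ, hlow, hmax, hl0, hl1,
        by rw [hfr]; exact hytight, rfl⟩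
    · rw [hfr]; exact hyd
  have hS2ne : S2.Nonempty := by
    rcases eq_or_lt_of_le hb0 with hb | hbpos
    · exact ⟨0, Or.inl ⟨hb.symm, rfl⟩⟩
    · obtain ⟨x, hx⟩ := exists_optimal a cm b hb0
      obtain ⟨w, hw, _⟩ := hfromOpt cm x (fun i => ⟨le_refl _, hcmcp i⟩) hx hbpos
      exact ⟨w, hw⟩
  have hTne : hS2fin.toFinset.Nonempty := by
    rwa [Set.Finite.toFinset_nonempty]
  set v := hS2fin.toFinset.min' hTne with hv
  have hleast2 : IsLeast S2 v :=
    ⟨hS2fin.mem_toFinset.mp (Finset.min'_mem _ _),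
      fun w hw => Finset.min'_le _ _ (hS2fin.mem_toFinset.mpr hw)⟩
  refine ⟨v, ⟨?_, ?_⟩, hleast2⟩
  · -- v belongs to the adversary's value set
    have hvS2 := hleast2.1
    simp only [hS2, Set.mem_setOf_eq] at hvS2
    rcases hvS2 with ⟨hbz, hvz⟩ | ⟨J, j, lam, hJne, hjJ, hlow, hmax, hl0, hl1, hsum, hval⟩
    · refine ⟨cm, fun _ => 0, fun i => ⟨le_refl _, hcmcp i⟩, ⟨⟨by simp [hb0], by norm_num⟩,
        ?_⟩, by simp [hvz]⟩
      intro z hz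
      have hz0 : ∀ i, z i = 0 := by
        have hsumz : ∑ i, a i * z i = 0 := by
          have h1 : (0:ℝ) ≤ ∑ i, a i * z i :=
            Finset.sum_nonneg fun i _ => mul_nonneg (le_of_lt (ha i)) (hz.2 i).1
          have h2 := hz.1
          rw [hbz] at h2
          linarith
        intro i
        have := (Finset.sum_eq_zero_iff_of_nonneg
          (fun i _ => mul_nonneg (le_of_lt (ha i)) (hz.2 i).1)).mp hsumz i (Finset.mem_univ i)
        rcases mul_eq_zero.mp this with h | h
        · exact absurd h (ne_of_gt (ha i))
        · exact h
      have : ∑ i, cm i * z i = 0 := Finset.sum_eq_zero fun i _ => by rw [hz0 i, mul_zero]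
      rw [this]
      simp
    · obtain ⟨c, hcU, hcopt⟩ :=
        optimal_of_prefix ha hcm hcmcp hjJ hlow hmax hl0 hl1 hsum
      exact ⟨c, fracVec J j lam, hcU, hcopt, hval⟩
  · -- v is a lower bound of the adversary's value set
    rintro w ⟨c, x, hcU, hxopt, rfl⟩
    rcases eq_or_lt_of_le hb0 with hb | hbpos
    · have hz0 : ∀ i, x i = 0 := by
        have h1 : (0:ℝ) ≤ ∑ i, a i * x i :=
          Finset.sum_nonneg fun i _ => mul_nonneg (le_of_lt (ha i)) (hxopt.1.2 i).1
        have h2 := hxopt.1.1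
        rw [← hb] at h2
        have hsumz : ∑ i, a i * x i = 0 := le_antisymm h2 h1
        intro i
        have := (Finset.sum_eq_zero_iff_of_nonneg
          (fun i _ => mul_nonneg (le_of_lt (ha i)) (hxopt.1.2 i).1)).mp hsumz i
          (Finset.mem_univ i)
        rcases mul_eq_zero.mp this with h | h
        · exact absurd h (ne_of_gt (ha i))
        · exact h
      have hdx : ∑ i, d i * x i = 0 := Finset.sum_eq_zero fun i _ => by rw [hz0 i, mul_zero]
      rw [hdx]
      exact hleast2.2 (Or.inl ⟨hb.symm, rfl⟩)
    · obtain ⟨w', hw', hle⟩ := hfromOpt c x hcU hxopt hbpos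
      exact le_trans (hleast2.2 hw') hle
end

section
/- Let a, d ∈ ℝ^n with a_i > 0 for all i, let p⁻, p⁺ ∈ ℝ^n with p⁻ ≤ p⁺ componentwise, inducing the interval order P on {1,…,n} via i <_P j iff p_i⁺ < p_j⁻, and let 0 < b ≤ Σ_{i=1}^n a_i. For k ∈ {1,…,n} set I_k⁻ := { i : p_i⁺ < p_k⁻ } and I_k⁰ := { i : p_i⁻ ≤ p_k⁻ ≤ p_i⁺ }, and let K := { k : 0 < b − Σ_{i∈I_k⁻} a_i ≤ Σ_{i∈I_k⁰} a_i }. Then K is nonempty, and min{ d^T x^F : F a fractional prefix of P with a^T x^F = b } = min over k ∈ K of ( Σ_{i∈I_k⁻} d_i + min{ Σ_{i∈I_k⁰} d_i y_i : y ∈ [0,1]^{I_k⁰}, Σ_{i∈I_k⁰} a_i y_i = b − Σ_{i∈I_k⁻} a_i } ). -/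
lemma fill_exists {n : ℕ} (a : Fin n → ℝ) (ha : ∀ i, 0 < a i) (s : Finset (Fin n)) :
    ∀ (c : ℝ), 0 < c → c ≤ ∑ i ∈ s, a i →
    ∃ y : Fin n → ℝ, (∀ i ∈ s, 0 ≤ y i ∧ y i ≤ 1) ∧ ∑ i ∈ s, a i * y i = c := by
  induction s using Finset.induction_on with
  | empty =>
    intro c hc hcs
    simp at hcs; linarith
  | @insert i t hit ih =>
    intro c hc hcs
    rw [Finset.sum_insert hit] at hcs
    by_cases hci : c ≤ a i
    · refine ⟨fun m => if m = i then c / a i else 0, ?_, ?_⟩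
      · intro m hm
        by_cases hmi : m = i
        · subst hmi
          simp only [if_pos rfl]
          exact ⟨le_of_lt (div_pos hc (ha m)), (div_le_one (ha m)).mpr hci⟩
        · simp [hmi]
      · rw [Finset.sum_insert hit]
        beta_reduce
        have h1 : ∑ m ∈ t, a m * (if m = i then c / a i else 0) = 0 := by
          apply Finset.sum_eq_zero
          intro m hm
          have : m ≠ i := fun h => hit (h ▸ hm)
          simp [this]
        rw [h1, if_pos rfl, mul_div_cancel₀ _ (ne_of_gt (ha i)), add_zero]
    · push_neg at hci
      obtain ⟨y, hy, hysum⟩ := ih (c - a i) (by linarith) (by linarith)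
      refine ⟨fun m => if m = i then 1 else y m, ?_, ?_⟩
      · intro m hm
        by_cases hmi : m = i
        · simp [hmi]
        · simp only [if_neg hmi]
          exact hy m (by rcases Finset.mem_insert.mp hm with h | h; exact absurd h hmi; exact h)
      · rw [Finset.sum_insert hit]
        beta_reduce
        rw [if_pos rfl]
        have h1 : ∑ m ∈ t, a m * (if m = i then 1 else y m) = ∑ m ∈ t, a m * y m := by
          apply Finset.sum_congr rfl
          intro m hm
          have : m ≠ i := fun h => hit (h ▸ hm)
          simp [this]
        rw [h1, hysum]; ring


lemma exchange_step {n : ℕ} (a d : Fin n → ℝ) (ha : ∀ i, 0 < a i) (s : Finset (Fin n))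
    (y : Fin n → ℝ) (hy : ∀ i ∈ s, 0 ≤ y i ∧ y i ≤ 1) (i₁ i₂ : Fin n) (h12 : i₁ ≠ i₂)
    (h1 : i₁ ∈ s.filter (fun i => y i ≠ 0 ∧ y i ≠ 1))
    (h2 : i₂ ∈ s.filter (fun i => y i ≠ 0 ∧ y i ≠ 1))
    (hd : d i₁ * a i₂ ≤ d i₂ * a i₁) :
    ∃ y' : Fin n → ℝ, (∀ i ∈ s, 0 ≤ y' i ∧ y' i ≤ 1) ∧
      (∑ i ∈ s, a i * y' i) = (∑ i ∈ s, a i * y i) ∧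
      (∑ i ∈ s, d i * y' i) ≤ (∑ i ∈ s, d i * y i) ∧
      (s.filter (fun i => y' i ≠ 0 ∧ y' i ≠ 1)).card <
        (s.filter (fun i => y i ≠ 0 ∧ y i ≠ 1)).card := by
  classical
  simp only [Finset.mem_filter] at h1 h2
  obtain ⟨hs1, hne01, hne11⟩ := h1
  obtain ⟨hs2, hne02, hne12⟩ := h2
  have hlt1 : y i₁ < 1 := lt_of_le_of_ne (hy i₁ hs1).2 hne11
  have hlt2 : 0 < y i₂ := lt_of_le_of_ne (hy i₂ hs2).1 (Ne.symm hne02)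
  set t := min ((1 - y i₁) / a i₂) (y i₂ / a i₁) with ht_def
  have ht : 0 < t := lt_min (div_pos (by linarith) (ha i₂)) (div_pos hlt2 (ha i₁))
  have hta2 : t * a i₂ ≤ 1 - y i₁ := by
    have := min_le_left ((1 - y i₁) / a i₂) (y i₂ / a i₁)
    rw [← ht_def] at this
    calc t * a i₂ ≤ ((1 - y i₁) / a i₂) * a i₂ :=
          mul_le_mul_of_nonneg_right this (le_of_lt (ha i₂))
      _ = 1 - y i₁ := div_mul_cancel₀ _ (ne_of_gt (ha i₂))
  have hta1 : t * a i₁ ≤ y i₂ := by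
    have := min_le_right ((1 - y i₁) / a i₂) (y i₂ / a i₁)
    rw [← ht_def] at this
    calc t * a i₁ ≤ (y i₂ / a i₁) * a i₁ :=
          mul_le_mul_of_nonneg_right this (le_of_lt (ha i₁))
      _ = y i₂ := div_mul_cancel₀ _ (ne_of_gt (ha i₁))
  set y' : Fin n → ℝ := fun m => if m = i₁ then y i₁ + t * a i₂
      else if m = i₂ then y i₂ - t * a i₁ else y m with hy'def
  have hv1 : y' i₁ = y i₁ + t * a i₂ := by simp [hy'def]
  have hv2 : y' i₂ = y i₂ - t * a i₁ := by simp [hy'def, Ne.symm h12]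
  have hvo : ∀ m, m ≠ i₁ → m ≠ i₂ → y' m = y m := by
    intro m hm1 hm2; simp [hy'def, hm1, hm2]
  have hpair : ({i₁, i₂} : Finset (Fin n)) ⊆ s := by
    intro m hm
    rcases Finset.mem_insert.mp hm with rfl | hm
    · exact hs1
    · rw [Finset.mem_singleton] at hm; exact hm ▸ hs2
  have key : ∀ f : Fin n → ℝ, ∑ i ∈ s, f i * y' i =
      (∑ i ∈ s, f i * y i) + (f i₁ * (t * a i₂) - f i₂ * (t * a i₁)) := by
    intro f
    have h0 : ∀ i ∈ s, i ∉ ({i₁, i₂} : Finset (Fin n)) → f i * y' i - f i * y i = 0 := by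
      intro m _ hm
      simp only [Finset.mem_insert, Finset.mem_singleton, not_or] at hm
      rw [hvo m hm.1 hm.2]; ring
    have hsub := Finset.sum_subset hpair h0
    rw [Finset.sum_pair h12] at hsub
    rw [Finset.sum_sub_distrib] at hsub
    rw [hv1, hv2] at hsub
    linear_combination -hsub
  refine ⟨y', ?_, ?_, ?_, ?_⟩
  · intro m hm
    by_cases hm1 : m = i₁
    · subst hm1; rw [hv1]
      constructor
      · have : 0 ≤ t * a i₂ := le_of_lt (mul_pos ht (ha i₂))
        linarith [(hy m hm).1]
      · linarith
    · by_cases hm2 : m = i₂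
      · subst hm2; rw [hv2]
        constructor
        · linarith
        · have : 0 ≤ t * a i₁ := le_of_lt (mul_pos ht (ha i₁))
          linarith [(hy m hm).2]
      · rw [hvo m hm1 hm2]; exact hy m hm
  · rw [key a]; ring
  · rw [key d]
    nlinarith [mul_le_mul_of_nonneg_left hd (le_of_lt ht)]
  · rcases min_cases ((1 - y i₁) / a i₂) (y i₂ / a i₁) with ⟨hmin, _⟩ | ⟨hmin, _⟩
    · -- i₁ becomes 1
      have h1' : y' i₁ = 1 := by
        rw [hv1, ht_def, hmin, div_mul_cancel₀ _ (ne_of_gt (ha i₂))]; ring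
      have hsub : s.filter (fun i => y' i ≠ 0 ∧ y' i ≠ 1) ⊆
          (s.filter (fun i => y i ≠ 0 ∧ y i ≠ 1)).erase i₁ := by
        intro m hm
        simp only [Finset.mem_filter, Finset.mem_erase] at hm ⊢
        obtain ⟨hms, hm0, hm1⟩ := hm
        have hmne : m ≠ i₁ := by rintro rfl; exact hm1 h1'
        refine ⟨hmne, hms, ?_⟩
        by_cases hmi2 : m = i₂
        · subst hmi2; exact ⟨hne02, hne12⟩
        · rw [hvo m hmne hmi2] at hm0 hm1; exact ⟨hm0, hm1⟩
      calc (s.filter (fun i => y' i ≠ 0 ∧ y' i ≠ 1)).card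
          ≤ ((s.filter (fun i => y i ≠ 0 ∧ y i ≠ 1)).erase i₁).card :=
            Finset.card_le_card hsub
        _ < (s.filter (fun i => y i ≠ 0 ∧ y i ≠ 1)).card :=
            Finset.card_erase_lt_of_mem (Finset.mem_filter.mpr ⟨hs1, hne01, hne11⟩)
    · -- i₂ becomes 0
      have h2' : y' i₂ = 0 := by
        rw [hv2, ht_def, hmin, div_mul_cancel₀ _ (ne_of_gt (ha i₁))]; ring
      have hsub : s.filter (fun i => y' i ≠ 0 ∧ y' i ≠ 1) ⊆
          (s.filter (fun i => y i ≠ 0 ∧ y i ≠ 1)).erase i₂ := by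
        intro m hm
        simp only [Finset.mem_filter, Finset.mem_erase] at hm ⊢
        obtain ⟨hms, hm0, hm1⟩ := hm
        have hmne : m ≠ i₂ := by rintro rfl; exact hm0 h2'
        refine ⟨hmne, hms, ?_⟩
        by_cases hmi1 : m = i₁
        · subst hmi1; exact ⟨hne01, hne11⟩
        · rw [hvo m hmi1 hmne] at hm0 hm1; exact ⟨hm0, hm1⟩
      calc (s.filter (fun i => y' i ≠ 0 ∧ y' i ≠ 1)).card
          ≤ ((s.filter (fun i => y i ≠ 0 ∧ y i ≠ 1)).erase i₂).card :=
            Finset.card_le_card hsub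
        _ < (s.filter (fun i => y i ≠ 0 ∧ y i ≠ 1)).card :=
            Finset.card_erase_lt_of_mem (Finset.mem_filter.mpr ⟨hs2, hne02, hne12⟩)

lemma exchange {n : ℕ} (a d : Fin n → ℝ) (ha : ∀ i, 0 < a i) (s : Finset (Fin n)) :
    ∀ (N : ℕ) (y : Fin n → ℝ), (∀ i ∈ s, 0 ≤ y i ∧ y i ≤ 1) →
      (s.filter (fun i => y i ≠ 0 ∧ y i ≠ 1)).card ≤ N →
    ∃ y' : Fin n → ℝ, (∀ i ∈ s, 0 ≤ y' i ∧ y' i ≤ 1) ∧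
      (∑ i ∈ s, a i * y' i) = (∑ i ∈ s, a i * y i) ∧
      (∑ i ∈ s, d i * y' i) ≤ (∑ i ∈ s, d i * y i) ∧
      (s.filter (fun i => y' i ≠ 0 ∧ y' i ≠ 1)).card ≤ 1 := by
  intro N
  induction N with
  | zero =>
    intro y hy hcard
    exact ⟨y, hy, rfl, le_refl _, by omega⟩
  | succ N ih =>
    intro y hy hcard
    by_cases hc1 : (s.filter (fun i => y i ≠ 0 ∧ y i ≠ 1)).card ≤ 1
    · exact ⟨y, hy, rfl, le_refl _, hc1⟩
    · push_neg at hc1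
      obtain ⟨i₁, h1, i₂, h2, h12⟩ := Finset.one_lt_card.mp hc1
      have hstep : ∃ y'' : Fin n → ℝ, (∀ i ∈ s, 0 ≤ y'' i ∧ y'' i ≤ 1) ∧
          (∑ i ∈ s, a i * y'' i) = (∑ i ∈ s, a i * y i) ∧
          (∑ i ∈ s, d i * y'' i) ≤ (∑ i ∈ s, d i * y i) ∧
          (s.filter (fun i => y'' i ≠ 0 ∧ y'' i ≠ 1)).card <
            (s.filter (fun i => y i ≠ 0 ∧ y i ≠ 1)).card := by
        rcases le_total (d i₁ * a i₂) (d i₂ * a i₁) with hle | hle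
        · exact exchange_step a d ha s y hy i₁ i₂ h12 h1 h2 hle
        · exact exchange_step a d ha s y hy i₂ i₁ (Ne.symm h12) h2 h1 hle
      obtain ⟨y'', hy'', hasum, hdsum, hcard''⟩ := hstep
      obtain ⟨y', hy', hasum', hdsum', hcard'⟩ := ih y'' hy'' (by omega)
      exact ⟨y', hy', hasum'.trans hasum, hdsum'.trans hdsum, hcard'⟩

lemma sum_split {n : ℕ} (s t : Finset (Fin n)) (h : Disjoint s t) (g : Fin n → ℝ)
    (h0 : ∀ i, i ∉ s → i ∉ t → g i = 0) :
    ∑ i, g i = (∑ i ∈ s, g i) + ∑ i ∈ t, g i := by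
  rw [← Finset.sum_union h]
  exact (Finset.sum_subset (Finset.subset_univ _) (fun i _ hi =>
    h0 i (fun h' => hi (Finset.mem_union_left _ h'))
      (fun h' => hi (Finset.mem_union_right _ h')))).symm

lemma sum_fracVec {n : ℕ} (f : Fin n → ℝ) (J : Finset (Fin n)) (j : Fin n) (lam : ℝ) :
    ∑ i, f i * fracVec J j lam i = f j * lam + ∑ i ∈ J.erase j, f i := by
  classical
  rw [← Finset.sum_erase_add _ _ (Finset.mem_univ j), add_comm]
  congr 1
  · simp [fracVec]
  · have h1 : ∀ i ∈ Finset.univ.erase j, f i * fracVec J j lam i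
        = if i ∈ J then f i else 0 := by
      intro i hi
      have hij : i ≠ j := (Finset.mem_erase.mp hi).1
      by_cases hiJ : i ∈ J <;> simp [fracVec, hij, hiJ]
    rw [Finset.sum_congr rfl h1, ← Finset.sum_filter]
    congr 1
    ext i
    simp [Finset.mem_erase, Finset.mem_filter, and_comm]

open Finset in
/-- Correctness of the head-decomposition algorithm for the adversary's problem:
for the interval order `P` given by `i <_P j ↔ pᵢ⁺ < pⱼ⁻`, the minimum of
`dᵀ x^F` over fractional prefixes `F` with `aᵀ x^F = b` equals the minimum over
heads `k ∈ K` of `∑_{i ∈ I_k⁻} dᵢ` plus the optimal value of the continuous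
knapsack over `I_k⁰` with capacity `b − ∑_{i ∈ I_k⁻} aᵢ`; moreover `K ≠ ∅`. -/
theorem head_decomposition_correct
    (n : ℕ) (a d pm pp : Fin n → ℝ) (ha : ∀ i, 0 < a i)
    (hp : ∀ i, pm i ≤ pp i)
    (b : ℝ) (hb0 : 0 < b) (hb1 : b ≤ ∑ i, a i) :
    let Ikm : Fin n → Finset (Fin n) := fun k => univ.filter fun i => pp i < pm k
    let Ik0 : Fin n → Finset (Fin n) := fun k =>
      univ.filter fun i => pm i ≤ pm k ∧ pm k ≤ pp i
    let K : Finset (Fin n) := univ.filter fun k =>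
      0 < b - ∑ i ∈ Ikm k, a i ∧ b - ∑ i ∈ Ikm k, a i ≤ ∑ i ∈ Ik0 k, a i
    K.Nonempty ∧
    ∃ v : ℝ,
      IsLeast {v : ℝ | ∃ (J : Finset (Fin n)) (j : Fin n) (lam : ℝ),
        J.Nonempty ∧ j ∈ J ∧
        (∀ k ∈ J, ∀ i : Fin n, pp i < pm k → i ∈ J) ∧
        (∀ i ∈ J, ¬ (pp j < pm i)) ∧
        0 < lam ∧ lam ≤ 1 ∧
        (∑ i, a i * fracVec J j lam i) = b ∧
        v = ∑ i, d i * fracVec J j lam i} v ∧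
      IsLeast {v : ℝ | ∃ k ∈ K, ∃ y : Fin n → ℝ,
        (∀ i ∈ Ik0 k, 0 ≤ y i ∧ y i ≤ 1) ∧
        (∑ i ∈ Ik0 k, a i * y i) = b - ∑ i ∈ Ikm k, a i ∧
        v = (∑ i ∈ Ikm k, d i) + ∑ i ∈ Ik0 k, d i * y i} v := by
  intro Ikm Ik0 K
  classical
  have hIkm : ∀ k i, i ∈ Ikm k ↔ pp i < pm k := by intro k i; simp [Ikm]
  have hIk0 : ∀ k i, i ∈ Ik0 k ↔ pm i ≤ pm k ∧ pm k ≤ pp i := by intro k i; simp [Ik0]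
  have hK : ∀ k, k ∈ K ↔
      (0 < b - ∑ i ∈ Ikm k, a i ∧ b - ∑ i ∈ Ikm k, a i ≤ ∑ i ∈ Ik0 k, a i) := by
    intro k; simp [K]
  have hdisj : ∀ k, Disjoint (Ikm k) (Ik0 k) := by
    intro k
    rw [Finset.disjoint_left]
    intro i h1 h2
    rw [hIkm] at h1
    rw [hIk0] at h2
    linarith [h2.2]
  -- Part 1: K is nonempty
  have hKne : K.Nonempty := by
    rcases Nat.eq_zero_or_pos n with hn | hn
    · exfalso
      subst hn
      simp at hb1
      linarith
    · obtain ⟨k₀, -, hk₀⟩ := Finset.exists_max_image Finset.univ pm ⟨⟨0, hn⟩, Finset.mem_univ _⟩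
      have hTk₀ : b ≤ ∑ i ∈ Finset.univ.filter (fun i => pm i ≤ pm k₀), a i := by
        have huniv : Finset.univ.filter (fun i => pm i ≤ pm k₀) = Finset.univ :=
          Finset.filter_true_of_mem (fun i hi => hk₀ i hi)
        rw [huniv]; exact hb1
      obtain ⟨k, hkT, hkmin⟩ := Finset.exists_min_image
        (Finset.univ.filter (fun k => b ≤ ∑ i ∈ Finset.univ.filter (fun i => pm i ≤ pm k), a i))
        pm ⟨k₀, Finset.mem_filter.mpr ⟨Finset.mem_univ _, hTk₀⟩⟩
      have hbC : b ≤ ∑ i ∈ Finset.univ.filter (fun i => pm i ≤ pm k), a i :=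
        (Finset.mem_filter.mp hkT).2
      have hunion : Finset.univ.filter (fun i => pm i ≤ pm k) = Ikm k ∪ Ik0 k := by
        ext i
        simp only [Finset.mem_filter, Finset.mem_union, hIkm, hIk0, Finset.mem_univ, true_and]
        constructor
        · intro h
          rcases lt_or_ge (pp i) (pm k) with h' | h'
          · exact Or.inl h'
          · exact Or.inr ⟨h, h'⟩
        · rintro (h | h)
          · exact le_of_lt (lt_of_le_of_lt (hp i) h)
          · exact h.1
      have hABC : ∑ i ∈ Finset.univ.filter (fun i => pm i ≤ pm k), a i
          = (∑ i ∈ Ikm k, a i) + ∑ i ∈ Ik0 k, a i := by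
        rw [hunion]; exact Finset.sum_union (hdisj k)
      have hA : ∑ i ∈ Ikm k, a i < b := by
        by_contra hcon
        push_neg at hcon
        have hsubm : Ikm k ⊆ Finset.univ.filter (fun i => pm i < pm k) := by
          intro i hi
          rw [hIkm] at hi
          exact Finset.mem_filter.mpr ⟨Finset.mem_univ _, lt_of_le_of_lt (hp i) hi⟩
        have hAle : ∑ i ∈ Ikm k, a i ≤ ∑ i ∈ Finset.univ.filter (fun i => pm i < pm k), a i :=
          Finset.sum_le_sum_of_subset_of_nonneg hsubm (fun i _ _ => le_of_lt (ha i))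
        rcases Finset.eq_empty_or_nonempty (Finset.univ.filter (fun i => pm i < pm k)) with hU | hU
        · rw [hU] at hAle
          simp at hAle
          linarith
        · obtain ⟨k', hk'U, hk'max⟩ := Finset.exists_max_image _ pm hU
          have hk'lt : pm k' < pm k := (Finset.mem_filter.mp hk'U).2
          have hk'T : k' ∈ Finset.univ.filter
              (fun k => b ≤ ∑ i ∈ Finset.univ.filter (fun i => pm i ≤ pm k), a i) := by
            refine Finset.mem_filter.mpr ⟨Finset.mem_univ _, ?_⟩
            have hsub2 : Finset.univ.filter (fun i => pm i < pm k)
                ⊆ Finset.univ.filter (fun i => pm i ≤ pm k') := by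
              intro i hi
              exact Finset.mem_filter.mpr ⟨Finset.mem_univ _, hk'max i hi⟩
            calc b ≤ ∑ i ∈ Ikm k, a i := hcon
              _ ≤ ∑ i ∈ Finset.univ.filter (fun i => pm i < pm k), a i := hAle
              _ ≤ ∑ i ∈ Finset.univ.filter (fun i => pm i ≤ pm k'), a i :=
                Finset.sum_le_sum_of_subset_of_nonneg hsub2 (fun i _ _ => le_of_lt (ha i))
          linarith [hkmin k' hk'T]
      exact ⟨k, (hK k).mpr ⟨by linarith, by linarith⟩⟩
  -- H2: from a feasible (k, y) produce a fractional prefix of no larger value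
  have H2 : ∀ (k : Fin n), k ∈ K → ∀ y : Fin n → ℝ,
      (∀ i ∈ Ik0 k, 0 ≤ y i ∧ y i ≤ 1) →
      (∑ i ∈ Ik0 k, a i * y i) = b - ∑ i ∈ Ikm k, a i →
      ∃ (J : Finset (Fin n)) (j : Fin n) (lam : ℝ),
        J.Nonempty ∧ j ∈ J ∧
        (∀ k' ∈ J, ∀ i : Fin n, pp i < pm k' → i ∈ J) ∧
        (∀ i ∈ J, ¬ (pp j < pm i)) ∧
        0 < lam ∧ lam ≤ 1 ∧
        (∑ i, a i * fracVec J j lam i) = b ∧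
        (∑ i, d i * fracVec J j lam i) ≤ (∑ i ∈ Ikm k, d i) + ∑ i ∈ Ik0 k, d i * y i := by
    intro k hk y hyb hysum
    obtain ⟨hc0, hcB⟩ := (hK k).mp hk
    obtain ⟨y', hy'b, hasum, hdsum, hcard⟩ := exchange a d ha (Ik0 k) _ y hyb (le_refl _)
    have hsum' : ∑ i ∈ Ik0 k, a i * y' i = b - ∑ i ∈ Ikm k, a i := by rw [hasum, hysum]
    have hjex : ∃ j ∈ Ik0 k, 0 < y' j ∧ y' j ≤ 1 ∧
        ∀ i ∈ Ik0 k, i ≠ j → y' i = 0 ∨ y' i = 1 := by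
      by_cases hfr : ∃ j ∈ Ik0 k, y' j ≠ 0 ∧ y' j ≠ 1
      · obtain ⟨j, hjmem, hj0, hj1⟩ := hfr
        refine ⟨j, hjmem, lt_of_le_of_ne (hy'b j hjmem).1 (Ne.symm hj0), (hy'b j hjmem).2, ?_⟩
        intro i hi hij
        by_contra hcon
        push_neg at hcon
        have hiF : i ∈ (Ik0 k).filter (fun i => y' i ≠ 0 ∧ y' i ≠ 1) :=
          Finset.mem_filter.mpr ⟨hi, hcon⟩
        have hjF : j ∈ (Ik0 k).filter (fun i => y' i ≠ 0 ∧ y' i ≠ 1) :=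
          Finset.mem_filter.mpr ⟨hjmem, hj0, hj1⟩
        exact hij (Finset.card_le_one.mp hcard i hiF j hjF)
      · push_neg at hfr
        have hjex0 : ∃ j ∈ Ik0 k, y' j ≠ 0 := by
          by_contra hcon
          push_neg at hcon
          have hz : ∑ i ∈ Ik0 k, a i * y' i = 0 :=
            Finset.sum_eq_zero (fun i hi => by rw [hcon i hi]; ring)
          rw [hz] at hsum'
          linarith
        obtain ⟨j, hjmem, hj0⟩ := hjex0
        have hj1 : y' j = 1 := hfr j hjmem hj0
        refine ⟨j, hjmem, by rw [hj1]; norm_num, by rw [hj1], ?_⟩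
        intro i hi hij
        by_cases h0 : y' i = 0
        · exact Or.inl h0
        · exact Or.inr (hfr i hi h0)
    obtain ⟨j, hjmem, hj0, hj1, hoth⟩ := hjex
    have hjIk0 := (hIk0 k j).mp hjmem
    set J : Finset (Fin n) := Ikm k ∪ (Ik0 k).filter (fun i => y' i ≠ 0) with hJdef
    have hjJ : j ∈ J := Finset.mem_union_right _ (Finset.mem_filter.mpr ⟨hjmem, ne_of_gt hj0⟩)
    have hpmJ : ∀ m ∈ J, pm m ≤ pm k := by
      intro m hm
      rcases Finset.mem_union.mp hm with hm | hm
      · exact le_of_lt (lt_of_le_of_lt (hp m) ((hIkm k m).mp hm))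
      · exact ((hIk0 k m).mp (Finset.mem_filter.mp hm).1).1
    have hjnm : j ∉ Ikm k := Finset.disjoint_right.mp (hdisj k) hjmem
    have hpt : ∀ f : Fin n → ℝ, ∀ i : Fin n, f i * fracVec J j (y' j) i =
        if i ∈ Ikm k then f i else if i ∈ Ik0 k then f i * y' i else 0 := by
      intro f i
      by_cases hij : i = j
      · subst hij
        rw [if_neg hjnm, if_pos hjmem]
        simp [fracVec]
      · by_cases him : i ∈ Ikm k
        · rw [if_pos him]
          have hiJ : i ∈ J := Finset.mem_union_left _ him
          simp [fracVec, hij, hiJ]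
        · rw [if_neg him]
          by_cases hi0 : i ∈ Ik0 k
          · rw [if_pos hi0]
            rcases hoth i hi0 hij with h0 | h1
            · have hiJ : i ∉ J := by
                intro hcon
                rcases Finset.mem_union.mp hcon with h | h
                · exact him h
                · exact (Finset.mem_filter.mp h).2 h0
              simp [fracVec, hij, hiJ, h0]
            · have hiJ : i ∈ J := Finset.mem_union_right _
                (Finset.mem_filter.mpr ⟨hi0, by rw [h1]; norm_num⟩)
              simp [fracVec, hij, hiJ, h1]
          · rw [if_neg hi0]
            have hiJ : i ∉ J := by
              intro hcon
              rcases Finset.mem_union.mp hcon with h | h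
              · exact him h
              · exact hi0 (Finset.mem_filter.mp h).1
            simp [fracVec, hij, hiJ]
    have hsums : ∀ f : Fin n → ℝ, ∑ i, f i * fracVec J j (y' j) i
        = (∑ i ∈ Ikm k, f i) + ∑ i ∈ Ik0 k, f i * y' i := by
      intro f
      have hss := sum_split (Ikm k) (Ik0 k) (hdisj k) (fun i => f i * fracVec J j (y' j) i)
        (fun i h1 h2 => by simp only [hpt f i, if_neg h1, if_neg h2])
      rw [hss]
      congr 1
      · exact Finset.sum_congr rfl (fun i hi => by simp only [hpt f i, if_pos hi])
      · exact Finset.sum_congr rfl (fun i hi => by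
          simp only [hpt f i, if_neg (Finset.disjoint_right.mp (hdisj k) hi), if_pos hi])
    refine ⟨J, j, y' j, ⟨j, hjJ⟩, hjJ, ?_, ?_, hj0, hj1, ?_, ?_⟩
    · intro m hm i hi
      exact Finset.mem_union_left _ ((hIkm k i).mpr (lt_of_lt_of_le hi (hpmJ m hm)))
    · intro i hi
      have h1 := hpmJ i hi
      intro hcon
      linarith [hjIk0.2]
    · rw [hsums a, hsum']; ring
    · rw [hsums d]
      have := hdsum
      linarith
  -- H1: from a fractional prefix produce a feasible (k, y) of equal value
  have H1 : ∀ (J : Finset (Fin n)) (j : Fin n) (lam : ℝ),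
      J.Nonempty → j ∈ J →
      (∀ k ∈ J, ∀ i : Fin n, pp i < pm k → i ∈ J) →
      (∀ i ∈ J, ¬ (pp j < pm i)) →
      0 < lam → lam ≤ 1 →
      (∑ i, a i * fracVec J j lam i) = b →
      ∃ k ∈ K, ∃ y : Fin n → ℝ,
        (∀ i ∈ Ik0 k, 0 ≤ y i ∧ y i ≤ 1) ∧
        (∑ i ∈ Ik0 k, a i * y i) = b - ∑ i ∈ Ikm k, a i ∧
        (∑ i, d i * fracVec J j lam i) = (∑ i ∈ Ikm k, d i) + ∑ i ∈ Ik0 k, d i * y i := by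
    intro J j lam hJne hjJ hlow hmax hl0 hl1 hsum
    obtain ⟨k, hkJ, hkmax⟩ := Finset.exists_max_image J pm hJne
    have hjk : ¬ pp j < pm k := hmax k hkJ
    have hjIk0 : j ∈ Ik0 k := (hIk0 k j).mpr ⟨hkmax j hjJ, le_of_not_gt hjk⟩
    have hmemJ : ∀ i ∈ J, i ∈ Ikm k ∨ i ∈ Ik0 k := by
      intro i hi
      rcases lt_or_ge (pp i) (pm k) with h | h
      · exact Or.inl ((hIkm k i).mpr h)
      · exact Or.inr ((hIk0 k i).mpr ⟨hkmax i hi, h⟩)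
    have hIkmJ : ∀ i ∈ Ikm k, i ∈ J := fun i hi => hlow k hkJ i ((hIkm k i).mp hi)
    have hjnm : j ∉ Ikm k := fun h => hjk ((hIkm k j).mp h)
    have hfv01 : ∀ i, 0 ≤ fracVec J j lam i ∧ fracVec J j lam i ≤ 1 := by
      intro i
      unfold fracVec
      by_cases hij : i = j
      · simp only [if_pos hij]
        exact ⟨le_of_lt hl0, hl1⟩
      · by_cases hiJ : i ∈ J <;> simp [hij, hiJ]
    have hsums : ∀ f : Fin n → ℝ, ∑ i, f i * fracVec J j lam i
        = (∑ i ∈ Ikm k, f i) + ∑ i ∈ Ik0 k, f i * fracVec J j lam i := by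
      intro f
      have h0 : ∀ i, i ∉ Ikm k → i ∉ Ik0 k → f i * fracVec J j lam i = 0 := by
        intro i h1 h2
        have hiJ : i ∉ J := fun h => (hmemJ i h).elim h1 h2
        have hij : i ≠ j := fun h => hiJ (h ▸ hjJ)
        simp [fracVec, hij, hiJ]
      rw [sum_split (Ikm k) (Ik0 k) (hdisj k) _ h0]
      congr 1
      exact Finset.sum_congr rfl (fun i hi => by
        have hij : i ≠ j := fun h => hjnm (h ▸ hi)
        have hiJ : i ∈ J := hIkmJ i hi
        simp [fracVec, hij, hiJ])
    have hasum : ∑ i ∈ Ik0 k, a i * fracVec J j lam i = b - ∑ i ∈ Ikm k, a i := by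
      have hh := hsums a
      rw [hsum] at hh
      linarith
    have hkK : k ∈ K := by
      rw [hK k]
      constructor
      · rw [← hasum]
        have hterm : a j * fracVec J j lam j ≤ ∑ i ∈ Ik0 k, a i * fracVec J j lam i :=
          Finset.single_le_sum (fun i _ => mul_nonneg (le_of_lt (ha i)) (hfv01 i).1) hjIk0
        have hfj : fracVec J j lam j = lam := by simp [fracVec]
        rw [hfj] at hterm
        nlinarith [ha j]
      · rw [← hasum]
        apply Finset.sum_le_sum
        intro i hi
        nlinarith [(hfv01 i).2, (hfv01 i).1, ha i]
    exact ⟨k, hkK, fracVec J j lam, fun i _ => hfv01 i, hasum, hsums d⟩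
  -- assemble
  obtain ⟨k₁, hk₁⟩ := id hKne
  obtain ⟨hc0₁, hcB₁⟩ := (hK k₁).mp hk₁
  obtain ⟨y₁, hy₁b, hy₁sum⟩ := fill_exists a ha (Ik0 k₁) _ hc0₁ hcB₁
  set lamOf : Finset (Fin n) × Fin n → ℝ :=
    fun p => (b - ∑ i ∈ p.1.erase p.2, a i) / a p.2 with hlamOf
  set val : Finset (Fin n) × Fin n → ℝ :=
    fun p => ∑ i, d i * fracVec p.1 p.2 (lamOf p) i with hval
  set P : Finset (Finset (Fin n) × Fin n) := Finset.univ.filter (fun p =>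
    p.1.Nonempty ∧ p.2 ∈ p.1 ∧ (∀ k ∈ p.1, ∀ i : Fin n, pp i < pm k → i ∈ p.1) ∧
    (∀ i ∈ p.1, ¬ (pp p.2 < pm i)) ∧ 0 < lamOf p ∧ lamOf p ≤ 1) with hP
  have hlam_eq : ∀ (J : Finset (Fin n)) (j : Fin n) (lam : ℝ),
      (∑ i, a i * fracVec J j lam i) = b → lam = lamOf (J, j) := by
    intro J j lam hsum
    rw [sum_fracVec a J j lam] at hsum
    rw [hlamOf]
    simp only
    rw [eq_div_iff (ne_of_gt (ha j))]
    linear_combination hsum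
  have hmemP : ∀ (J : Finset (Fin n)) (j : Fin n) (lam : ℝ),
      J.Nonempty → j ∈ J → (∀ k ∈ J, ∀ i : Fin n, pp i < pm k → i ∈ J) →
      (∀ i ∈ J, ¬ (pp j < pm i)) → 0 < lam → lam ≤ 1 →
      (∑ i, a i * fracVec J j lam i) = b →
      (J, j) ∈ P ∧ val (J, j) = ∑ i, d i * fracVec J j lam i := by
    intro J j lam h1 h2 h3 h4 h5 h6 h7
    have hl := hlam_eq J j lam h7
    constructor
    · rw [hP, Finset.mem_filter]
      exact ⟨Finset.mem_univ _, h1, h2, h3, h4, hl ▸ h5, hl ▸ h6⟩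
    · rw [hval]
      simp only
      rw [← hl]
  have hPmem : ∀ p ∈ P,
      ∃ (J : Finset (Fin n)) (j : Fin n) (lam : ℝ),
        J.Nonempty ∧ j ∈ J ∧
        (∀ k ∈ J, ∀ i : Fin n, pp i < pm k → i ∈ J) ∧
        (∀ i ∈ J, ¬ (pp j < pm i)) ∧
        0 < lam ∧ lam ≤ 1 ∧
        (∑ i, a i * fracVec J j lam i) = b ∧
        val p = ∑ i, d i * fracVec J j lam i := by
    intro p hpmem
    rw [hP, Finset.mem_filter] at hpmem
    obtain ⟨-, h1, h2, h3, h4, h5, h6⟩ := hpmem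
    refine ⟨p.1, p.2, lamOf p, h1, h2, h3, h4, h5, h6, ?_, ?_⟩
    · rw [sum_fracVec a]
      rw [hlamOf]
      simp only
      rw [mul_comm, div_mul_cancel₀ _ (ne_of_gt (ha p.2))]
      ring
    · rw [hval]
  obtain ⟨J₁, j₁, lam₁, hq1, hq2, hq3, hq4, hq5, hq6, hq7, hq8⟩ :=
    H2 k₁ hk₁ y₁ hy₁b hy₁sum
  have hP1 := hmemP J₁ j₁ lam₁ hq1 hq2 hq3 hq4 hq5 hq6 hq7
  have hPne : (P.image val).Nonempty := ⟨val (J₁, j₁), Finset.mem_image_of_mem val hP1.1⟩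
  set v := (P.image val).min' hPne with hv
  have hvmem : ∃ p ∈ P, val p = v := by
    have := (P.image val).min'_mem hPne
    rw [Finset.mem_image] at this
    exact this
  obtain ⟨p₀, hp₀P, hp₀v⟩ := hvmem
  obtain ⟨J₀, j₀, lam₀, hr1, hr2, hr3, hr4, hr5, hr6, hr7, hr8⟩ := hPmem p₀ hp₀P
  have hvS1 : v = ∑ i, d i * fracVec J₀ j₀ lam₀ i := by rw [← hp₀v, hr8]
  refine ⟨hKne, v, ⟨?_, ?_⟩, ⟨?_, ?_⟩⟩
  · -- v ∈ S1
    exact ⟨J₀, j₀, lam₀, hr1, hr2, hr3, hr4, hr5, hr6, hr7, hvS1⟩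
  · -- v lower bound of S1
    intro w hw
    obtain ⟨J, j, lam, h1, h2, h3, h4, h5, h6, h7, h8⟩ := hw
    have hm := hmemP J j lam h1 h2 h3 h4 h5 h6 h7
    have : v ≤ val (J, j) := Finset.min'_le _ _ (Finset.mem_image_of_mem val hm.1)
    rw [hm.2, ← h8] at this
    exact this
  · -- v ∈ S2
    obtain ⟨k, hkK, y, hyb, hysum, heq⟩ := H1 J₀ j₀ lam₀ hr1 hr2 hr3 hr4 hr5 hr6 hr7
    exact ⟨k, hkK, y, hyb, hysum, by rw [hvS1, heq]⟩
  · -- v lower bound of S2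
    intro w hw
    obtain ⟨k, hkK, y, hyb, hysum, hweq⟩ := hw
    obtain ⟨J, j, lam, h1, h2, h3, h4, h5, h6, h7, hle⟩ := H2 k hkK y hyb hysum
    have hm := hmemP J j lam h1 h2 h3 h4 h5 h6 h7
    have hvle : v ≤ val (J, j) := Finset.min'_le _ _ (Finset.mem_image_of_mem val hm.1)
    rw [hm.2] at hvle
    rw [hweq]
    linarith
end

section
/- In the discrete uncorrelated reduction instance, let b ∈ [ε, M). Then for every c ∈ U and every optimal solution x of the follower's problem (max c^T x s.t. a^T x ≤ b, 0 ≤ x ≤ 1) such that d^T x = f(b) (i.e., c and x together attain the adversary's minimum), the solution satisfies x_i ∈ {0, 1} for all i ∈ {2, …, n−1}. -/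
noncomputable section

/-- The constant `ε = 1/4` of the reduction instance. -/
def eps : ℝ := 1 / 4

/-- The constant `M = ∑ wᵢ + ε` of the reduction instance. -/
def Mval (m : ℕ) (w : Fin m → ℤ) : ℝ := (∑ i, (w i : ℝ)) + eps

/-- Item sizes `a = (ε, w₁, …, w_m, M)` of the reduction instance. -/
def avec (m : ℕ) (w : Fin m → ℤ) : Fin (m + 2) → ℝ := fun i =>
  if h0 : (i : ℕ) = 0 then eps
  else if h1 : (i : ℕ) = m + 1 then Mval m w
  else (w ⟨(i : ℕ) - 1, by have := i.isLt; omega⟩ : ℝ)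

/-- Leader's item values `d = (−M, −w₁, …, −w_m, ε)` of the reduction instance. -/
def dvec (m : ℕ) (w : Fin m → ℤ) : Fin (m + 2) → ℝ := fun i =>
  if h0 : (i : ℕ) = 0 then -Mval m w
  else if h1 : (i : ℕ) = m + 1 then eps
  else -(w ⟨(i : ℕ) - 1, by have := i.isLt; omega⟩ : ℝ)

/-- Membership in the discrete uncorrelated uncertainty set
`U = ∏_{i=1}^{n} {i·aᵢ, (n+i)·aᵢ}` (with `n = m + 2` and 1-based indices). -/
def inU (m : ℕ) (w : Fin m → ℤ) (c : Fin (m + 2) → ℝ) : Prop :=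
  ∀ i : Fin (m + 2),
    c i = ((i : ℕ) + 1) * avec m w i ∨ c i = ((m + 2) + ((i : ℕ) + 1)) * avec m w i

/-- The leader's objective `f(b) = min_{c ∈ U} min { dᵀx : x optimal for c }`
of the reduction instance (pessimistic view). -/
def fval (m : ℕ) (w : Fin m → ℤ) (b : ℝ) : ℝ :=
  sInf {v : ℝ | ∃ c x : Fin (m + 2) → ℝ,
    inU m w c ∧ optimalKP (avec m w) c b x ∧ v = ∑ i, dvec m w i * x i}

/-- `V` is a subset sum of `{w₁, …, w_m}`. -/
def isSubsetSum (m : ℕ) (w : Fin m → ℤ) (V : ℝ) : Prop :=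
  ∃ S : Finset (Fin m), V = ∑ i ∈ S, (w i : ℝ)

lemma sum_split_s10 {m : ℕ} (f : Fin (m+2) → ℝ) :
    ∑ k, f k = f 0 + (∑ k : Fin m, f k.castSucc.succ) + f (Fin.last (m+1)) := by
  rw [Fin.sum_univ_succ, Fin.sum_univ_castSucc]
  exact (add_assoc _ _ _).symm

lemma sum_two_ite {n : ℕ} {j k : Fin n} (hjk : j ≠ k) (u v : ℝ) :
    ∑ i, (if i = j then u else if i = k then v else 0) = u + v := by
  have h : ∀ i, (if i = j then u else if i = k then v else 0)
      = (if i = j then u else 0) + (if i = k then v else 0) := by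
    intro i
    by_cases h1 : i = j
    · simp [h1, hjk]
    · by_cases h2 : i = k <;> simp [h1, h2, Ne.symm hjk]
  simp_rw [h, Finset.sum_add_distrib, Finset.sum_ite_eq', Finset.mem_univ, if_true]

lemma exchange_s10 {n : ℕ} {a c : Fin n → ℝ} {b : ℝ} {x : Fin n → ℝ}
    (hx : optimalKP a c b x) {j k : Fin n} (hjk : j ≠ k)
    (haj : 0 < a j) (hak : 0 < a k)
    (hxj : 0 < x j) (hxk : x k < 1)
    (hr : c j * a k < c k * a j) : False := by
  obtain ⟨⟨hsum, hbox⟩, hopt⟩ := hx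
  set t : ℝ := min (x j * a j) ((1 - x k) * a k) with ht
  have htpos : 0 < t := lt_min (mul_pos hxj haj) (mul_pos (by linarith) hak)
  have htj : t ≤ x j * a j := min_le_left _ _
  have htk : t ≤ (1 - x k) * a k := min_le_right _ _
  have hajne : a j ≠ 0 := ne_of_gt haj
  have hakne : a k ≠ 0 := ne_of_gt hak
  set y : Fin n → ℝ :=
    fun i => x i + (if i = j then -(t / a j) else if i = k then t / a k else 0) with hy
  have hyj : y j = x j - t / a j := by simp [hy]; ring
  have hyk : y k = x k + t / a k := by simp [hy, Ne.symm hjk]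
  have hyo : ∀ i, i ≠ j → i ≠ k → y i = x i := by intro i h1 h2; simp [hy, h1, h2]
  have hdivj : t / a j ≤ x j := (div_le_iff₀ haj).mpr htj
  have hdivk : t / a k ≤ 1 - x k := (div_le_iff₀ hak).mpr htk
  have hdivj0 : 0 ≤ t / a j := le_of_lt (div_pos htpos haj)
  have hdivk0 : 0 ≤ t / a k := le_of_lt (div_pos htpos hak)
  have hfy : feasibleKP a b y := by
    constructor
    · have hpt : ∀ i, a i * y i = a i * x i + (if i = j then -t else if i = k then t else 0) := by
        intro i
        by_cases h1 : i = j
        · rw [h1, hyj, if_pos rfl]; field_simp; ring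
        · by_cases h2 : i = k
          · rw [h2, hyk, if_neg (h2 ▸ h1), if_pos rfl]; field_simp
          · rw [hyo i h1 h2, if_neg h1, if_neg h2, add_zero]
      calc ∑ i, a i * y i = (∑ i, a i * x i)
            + ∑ i, (if i = j then -t else if i = k then t else 0) := by
              rw [← Finset.sum_add_distrib]; exact Finset.sum_congr rfl fun i _ => hpt i
        _ = ∑ i, a i * x i := by rw [sum_two_ite hjk]; ring
        _ ≤ b := hsum
    · intro i
      by_cases h1 : i = j
      · rw [h1, hyj]
        have := (hbox j).2
        constructor <;> linarith
      · by_cases h2 : i = k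
        · rw [h2, hyk]
          have := (hbox k).1
          constructor <;> linarith
        · rw [hyo i h1 h2]; exact hbox i
  have hgain : ∑ i, c i * y i = (∑ i, c i * x i) + (-(c j * (t / a j)) + c k * (t / a k)) := by
    have hpt : ∀ i, c i * y i = c i * x i
        + (if i = j then -(c j * (t / a j)) else if i = k then c k * (t / a k) else 0) := by
      intro i
      by_cases h1 : i = j
      · rw [h1, hyj, if_pos rfl]; ring
      · by_cases h2 : i = k
        · rw [h2, hyk, if_neg (h2 ▸ h1), if_pos rfl]; ring
        · rw [hyo i h1 h2, if_neg h1, if_neg h2, add_zero]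
    rw [← sum_two_ite hjk (-(c j * (t / a j))) (c k * (t / a k)), ← Finset.sum_add_distrib]
    exact Finset.sum_congr rfl fun i _ => hpt i
  have hpos : 0 < -(c j * (t / a j)) + c k * (t / a k) := by
    have h1 : c j * (t / a j) = c j * t / a j := by ring
    have h2 : c k * (t / a k) = c k * t / a k := by ring
    rw [h1, h2]
    have hlt : c j * t / a j < c k * t / a k := by
      rw [div_lt_div_iff₀ haj hak]
      nlinarith
    linarith
  have := hopt y hfy
  rw [hgain] at this
  linarith

lemma eps_pos : (0:ℝ) < eps := by norm_num [eps]

lemma wcast_one_le {m : ℕ} {w : Fin m → ℤ} (hw : ∀ i, 1 ≤ w i) (k : Fin m) :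
    (1:ℝ) ≤ (w k : ℝ) := by exact_mod_cast hw k

lemma Mval_pos {m : ℕ} {w : Fin m → ℤ} (hw : ∀ i, 1 ≤ w i) : 0 < Mval m w := by
  have h : (0:ℝ) ≤ ∑ i, (w i : ℝ) :=
    Finset.sum_nonneg fun i _ => le_trans zero_le_one (wcast_one_le hw i)
  have := eps_pos
  rw [Mval]; linarith

lemma avec_zero' {m : ℕ} {w : Fin m → ℤ} {k : Fin (m+2)} (hk : (k:ℕ) = 0) :
    avec m w k = eps := by simp [avec, hk]

lemma avec_last' {m : ℕ} {w : Fin m → ℤ} {k : Fin (m+2)} (hk : (k:ℕ) = m+1) :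
    avec m w k = Mval m w := by simp [avec, hk]

lemma avec_mid' {m : ℕ} {w : Fin m → ℤ} {k : Fin (m+2)}
    (h0 : (k:ℕ) ≠ 0) (h1 : (k:ℕ) ≠ m+1) :
    avec m w k = (w ⟨(k:ℕ) - 1, by have := k.isLt; omega⟩ : ℝ) := by
  simp [avec, h0, h1]

lemma dvec_zero' {m : ℕ} {w : Fin m → ℤ} {k : Fin (m+2)} (hk : (k:ℕ) = 0) :
    dvec m w k = -Mval m w := by simp [dvec, hk]

lemma dvec_last' {m : ℕ} {w : Fin m → ℤ} {k : Fin (m+2)} (hk : (k:ℕ) = m+1) :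
    dvec m w k = eps := by simp [dvec, hk]

lemma dvec_mid' {m : ℕ} {w : Fin m → ℤ} {k : Fin (m+2)}
    (h0 : (k:ℕ) ≠ 0) (h1 : (k:ℕ) ≠ m+1) :
    dvec m w k = -(w ⟨(k:ℕ) - 1, by have := k.isLt; omega⟩ : ℝ) := by
  simp [dvec, h0, h1]

lemma avec_pos {m : ℕ} {w : Fin m → ℤ} (hw : ∀ i, 1 ≤ w i) (k : Fin (m+2)) :
    0 < avec m w k := by
  by_cases h0 : (k:ℕ) = 0
  · rw [avec_zero' h0]; exact eps_pos
  · by_cases h1 : (k:ℕ) = m+1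
    · rw [avec_last' h1]; exact Mval_pos hw
    · rw [avec_mid' h0 h1]
      exact lt_of_lt_of_le zero_lt_one (wcast_one_le hw _)

lemma mid_val {m : ℕ} (k : Fin m) : ((k.castSucc.succ : Fin (m+2)) : ℕ) = (k:ℕ) + 1 := rfl

lemma avec_mid {m : ℕ} {w : Fin m → ℤ} (k : Fin m) :
    avec m w k.castSucc.succ = (w k : ℝ) := by
  rw [avec_mid' (by rw [mid_val]; omega) (by rw [mid_val]; have := k.isLt; omega)]
  simp [mid_val]

lemma dvec_mid {m : ℕ} {w : Fin m → ℤ} (k : Fin m) :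
    dvec m w k.castSucc.succ = -(w k : ℝ) := by
  rw [dvec_mid' (by rw [mid_val]; omega) (by rw [mid_val]; have := k.isLt; omega)]
  simp [mid_val]

def cAlt (m : ℕ) (w : Fin m → ℤ) : Fin (m+2) → ℝ :=
  fun k => if k = 0 then ((m:ℝ) + 3) * eps else (((k:ℕ):ℝ) + 1) * avec m w k

def xAlt (m : ℕ) (w : Fin m → ℤ) (b : ℝ) : Fin (m+2) → ℝ :=
  fun k => if (k:ℕ) = 0 then 1 else if (k:ℕ) = m+1 then (b - eps) / Mval m w else 0

lemma cAlt_zero {m : ℕ} {w : Fin m → ℤ} : cAlt m w 0 = ((m:ℝ) + 3) * eps := by simp [cAlt]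

lemma cAlt_ne {m : ℕ} {w : Fin m → ℤ} {k : Fin (m+2)} (hk : k ≠ 0) :
    cAlt m w k = (((k:ℕ):ℝ) + 1) * avec m w k := by simp [cAlt, hk]

lemma xAlt_zero' {m : ℕ} {w : Fin m → ℤ} {b : ℝ} {k : Fin (m+2)} (hk : (k:ℕ) = 0) :
    xAlt m w b k = 1 := by simp [xAlt, hk]

lemma xAlt_last' {m : ℕ} {w : Fin m → ℤ} {b : ℝ} {k : Fin (m+2)} (hk : (k:ℕ) = m+1) :
    xAlt m w b k = (b - eps) / Mval m w := by simp [xAlt, hk]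

lemma xAlt_mid' {m : ℕ} {w : Fin m → ℤ} {b : ℝ} {k : Fin (m+2)}
    (h0 : (k:ℕ) ≠ 0) (h1 : (k:ℕ) ≠ m+1) : xAlt m w b k = 0 := by simp [xAlt, h0, h1]

set_option maxHeartbeats 2000000 in
/-- In the discrete uncorrelated reduction instance, for `b ∈ [ε, M)`, every
adversary-optimal pair `(c, x)` yields a follower's solution with
`xᵢ ∈ {0, 1}` for all items `i ∈ {2, …, n−1}`. -/
theorem discrete_uncorrelated_binary_components
    (m : ℕ) (w : Fin m → ℤ) (W : ℤ) (hw : ∀ i, 1 ≤ w i)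
    (hW1 : 1 ≤ W) (hW2 : W ≤ (∑ i, w i) - 1)
    (b : ℝ) (hb0 : eps ≤ b) (hb1 : b < Mval m w)
    (c x : Fin (m + 2) → ℝ) (hc : inU m w c)
    (hx : optimalKP (avec m w) c b x)
    (hattain : (∑ i, dvec m w i * x i) = fval m w b)
    (i : Fin (m + 2)) (hi0 : 0 < (i : ℕ)) (hi1 : (i : ℕ) < m + 1) :
    x i = 0 ∨ x i = 1 := by
  rcases eq_or_ne (x i) 0 with h0 | h0
  · exact Or.inl h0
  rcases eq_or_ne (x i) 1 with h1 | h1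
  · exact Or.inr h1
  exfalso
  have heps := eps_pos
  have hM : 0 < Mval m w := Mval_pos hw
  have hbox := hx.1.2
  have hxi0 : 0 < x i := lt_of_le_of_ne (hbox i).1 (Ne.symm h0)
  have hxi1 : x i < 1 := lt_of_le_of_ne (hbox i).2 h1
  have hLval : ((Fin.last (m+1) : Fin (m+2)) : ℕ) = m + 1 := rfl
  have h0val : ((0 : Fin (m+2)) : ℕ) = 0 := rfl
  have hiL : i ≠ Fin.last (m+1) := fun h => by rw [h, hLval] at hi1; omega
  have hi0ne : (0 : Fin (m+2)) ≠ i := fun h => by rw [← h, h0val] at hi0; omega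
  have hi_le : ((i:ℕ) : ℝ) ≤ (m:ℝ) := by exact_mod_cast (by omega : (i:ℕ) ≤ m)
  have hi_ge : (1:ℝ) ≤ ((i:ℕ) : ℝ) := by exact_mod_cast hi0
  have hai : 0 < avec m w i := avec_pos hw i
  -- x (Fin.last (m+1)) < 1
  have hxL : x (Fin.last (m+1)) < 1 := by
    have hterm : avec m w (Fin.last (m+1)) * x (Fin.last (m+1)) ≤ ∑ k, avec m w k * x k :=
      Finset.single_le_sum (f := fun k => avec m w k * x k)
        (fun k _ => mul_nonneg (avec_pos hw k).le (hbox k).1) (Finset.mem_univ (Fin.last (m+1)))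
    rw [avec_last' hLval] at hterm
    have h2 : Mval m w * x (Fin.last (m+1)) ≤ b := le_trans hterm hx.1.1
    nlinarith
  -- c i must be "high"
  have hchigh : c i = ((m:ℝ) + ((i:ℕ):ℝ) + 3) * avec m w i := by
    rcases hc i with hlow | hhigh
    · exfalso
      refine exchange_s10 hx hiL hai (avec_pos hw (Fin.last (m+1))) hxi0 hxL ?_
      rw [avec_last' hLval, hlow]
      rcases hc (Fin.last (m+1)) with hL | hL <;> rw [hL, avec_last' hLval, hLval] <;> push_cast <;>
        nlinarith [mul_pos hai hM]
    · rw [hhigh]; push_cast; ring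
  -- x 0 = 0
  have hx0 : x 0 = 0 := by
    by_contra h
    have hx00 : 0 < x 0 := lt_of_le_of_ne (hbox 0).1 (Ne.symm h)
    refine exchange_s10 hx hi0ne (avec_pos hw 0) hai hx00 hxi1 ?_
    rw [hchigh, avec_zero' h0val]
    rcases hc 0 with hL | hL <;> rw [hL, avec_zero' h0val, h0val] <;> push_cast <;>
      nlinarith [mul_pos heps hai]
  -- lower bound on the attained value
  set Sw : ℝ := ∑ k : Fin m, ((w k : ℤ) : ℝ) with hSw
  have hMdef : Mval m w = Sw + eps := by rw [Mval, hSw]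
  set j' : Fin m := ⟨(i:ℕ) - 1, by omega⟩ with hj'def
  have hj' : j'.castSucc.succ = i := by
    apply Fin.ext
    rw [mid_val]
    show (i:ℕ) - 1 + 1 = (i:ℕ)
    omega
  have hwj' : (1:ℝ) ≤ (w j' : ℝ) := wcast_one_le hw j'
  have hlow2 : -Sw < ∑ k, dvec m w k * x k := by
    rw [sum_split_s10 (fun k => dvec m w k * x k)]
    have e0 : dvec m w 0 * x 0 = 0 := by rw [hx0, mul_zero]
    have eL : dvec m w (Fin.last (m+1)) * x (Fin.last (m+1)) = eps * x (Fin.last (m+1)) := by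
      rw [dvec_last' hLval]
    have emid : (∑ k : Fin m, dvec m w k.castSucc.succ * x k.castSucc.succ)
        = -∑ k : Fin m, (w k : ℝ) * x k.castSucc.succ := by
      rw [← Finset.sum_neg_distrib]
      exact Finset.sum_congr rfl fun k _ => by rw [dvec_mid]; ring
    rw [e0, eL, emid]
    have hmidlt : ∑ k : Fin m, (w k : ℝ) * x k.castSucc.succ < Sw := by
      have hper : ∀ k ∈ Finset.univ, (w k : ℝ) * x k.castSucc.succ
          ≤ (if k = j' then (w j' : ℝ) * x i else (w k : ℝ)) := by
        intro k _
        by_cases hk : k = j'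
        · rw [if_pos hk, hk, hj']
        · rw [if_neg hk]
          have hb1 := (hbox k.castSucc.succ).1
          have hb2 := (hbox k.castSucc.succ).2
          nlinarith [wcast_one_le hw k]
      have hsum_ite : ∑ k : Fin m, (if k = j' then (w j' : ℝ) * x i else (w k : ℝ))
          = Sw + ((w j' : ℝ) * x i - (w j' : ℝ)) := by
        have hpt : ∀ k : Fin m, (if k = j' then (w j' : ℝ) * x i else (w k : ℝ))
            = (w k : ℝ) + (if k = j' then (w j' : ℝ) * x i - (w j' : ℝ) else 0) := by
          intro k
          by_cases hk : k = j'
          · rw [if_pos hk, if_pos hk, hk]; ring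
          · rw [if_neg hk, if_neg hk, add_zero]
        simp_rw [hpt]
        rw [Finset.sum_add_distrib, Finset.sum_ite_eq', if_pos (Finset.mem_univ j'), ← hSw]
      have := Finset.sum_le_sum hper
      rw [hsum_ite] at this
      nlinarith
    have hepsL : 0 ≤ eps * x (Fin.last (m+1)) := mul_nonneg heps.le (hbox (Fin.last (m+1))).1
    linarith
  -- the alternative pair (c', x')
  have hLne0 : (Fin.last (m+1) : Fin (m+2)) ≠ 0 := fun h => by simpa using congrArg Fin.val h
  set c' : Fin (m+2) → ℝ := cAlt m w with hc'def
  set x' : Fin (m+2) → ℝ := xAlt m w b with hx'def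
  have hc'0 : c' 0 = ((m:ℝ) + 3) * eps := cAlt_zero
  have hc'ne : ∀ k : Fin (m+2), k ≠ 0 → c' k = (((k:ℕ):ℝ) + 1) * avec m w k :=
    fun k hk => cAlt_ne hk
  have hx'0 : x' 0 = 1 := xAlt_zero' h0val
  have hx'L : x' (Fin.last (m+1)) = (b - eps) / Mval m w := xAlt_last' hLval
  have hx'mid : ∀ k : Fin m, x' k.castSucc.succ = 0 := fun k =>
    xAlt_mid' (by rw [mid_val]; omega) (by rw [mid_val]; have := k.isLt; omega)
  have hU' : inU m w c' := by
    intro k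
    by_cases hk : k = 0
    · right
      rw [hk, hc'0, avec_zero' h0val, h0val]
      push_cast; ring
    · left
      rw [hc'ne k hk]
  have hq0 : 0 ≤ (b - eps) / Mval m w := div_nonneg (by linarith) hM.le
  have hq1 : (b - eps) / Mval m w < 1 := (div_lt_one hM).mpr (by linarith)
  have hfeas' : feasibleKP (avec m w) b x' := by
    constructor
    · rw [sum_split_s10 (fun k => avec m w k * x' k)]
      have e0 : avec m w 0 * x' 0 = eps := by rw [hx'0, avec_zero' h0val, mul_one]
      have eL : avec m w (Fin.last (m+1)) * x' (Fin.last (m+1)) = b - eps := by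
        rw [avec_last' hLval, hx'L, mul_comm, div_mul_cancel₀ _ (ne_of_gt hM)]
      have emid : (∑ k : Fin m, avec m w k.castSucc.succ * x' k.castSucc.succ) = 0 := by
        apply Finset.sum_eq_zero
        intro k _
        rw [hx'mid k, mul_zero]
      rw [e0, eL, emid]
      linarith
    · intro k
      rw [hx'def]
      by_cases hk0 : (k:ℕ) = 0
      · rw [xAlt_zero' hk0]; norm_num
      · by_cases hk1 : (k:ℕ) = m+1
        · rw [xAlt_last' hk1]; exact ⟨hq0, hq1.le⟩
        · rw [xAlt_mid' hk0 hk1]; norm_num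
  have hcx' : ∑ k, c' k * x' k = eps + ((m:ℝ) + 2) * b := by
    rw [sum_split_s10 (fun k => c' k * x' k)]
    have e0 : c' 0 * x' 0 = ((m:ℝ) + 3) * eps := by rw [hx'0, hc'0, mul_one]
    have eL : c' (Fin.last (m+1)) * x' (Fin.last (m+1)) = ((m:ℝ) + 2) * (b - eps) := by
      rw [hc'ne (Fin.last (m+1)) hLne0, hx'L, avec_last' hLval, hLval]
      push_cast
      field_simp
      ring
    have emid : (∑ k : Fin m, c' k.castSucc.succ * x' k.castSucc.succ) = 0 := by
      apply Finset.sum_eq_zero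
      intro k _
      rw [hx'mid k, mul_zero]
    rw [e0, eL, emid]
    ring
  have hopt' : optimalKP (avec m w) c' b x' := by
    refine ⟨hfeas', ?_⟩
    intro y hy
    have hybox := hy.2
    have hsplit : ∑ k, c' k * y k
        = (∑ k, (c' k - ((m:ℝ) + 2) * avec m w k) * y k)
          + ((m:ℝ) + 2) * ∑ k, avec m w k * y k := by
      rw [Finset.mul_sum, ← Finset.sum_add_distrib]
      exact Finset.sum_congr rfl fun k _ => by ring
    have hterm : ∀ k ∈ Finset.univ,
        (c' k - ((m:ℝ) + 2) * avec m w k) * y k ≤ (if k = (0 : Fin (m+2)) then eps else 0) := by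
      intro k _
      by_cases hk : k = 0
      · rw [if_pos hk, hk, hc'0, avec_zero' h0val]
        have hb1 := (hybox 0).1
        have hb2 := (hybox 0).2
        nlinarith
      · rw [if_neg hk, hc'ne k hk]
        have hkv0 : (k:ℕ) ≠ 0 := fun h => hk (Fin.ext (by rw [h, h0val]))
        have hb1 := (hybox k).1
        by_cases hkL : (k:ℕ) = m+1
        · have hcast : ((k:ℕ):ℝ) = (m:ℝ) + 1 := by rw [hkL]; push_cast; ring
          rw [avec_last' hkL, hcast]
          have : ((m:ℝ) + 1 + 1) * Mval m w - ((m:ℝ) + 2) * Mval m w = 0 := by ring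
          rw [this, zero_mul]
        · have hkle : ((k:ℕ):ℝ) ≤ (m:ℝ) := by
            exact_mod_cast (by have := k.isLt; omega : (k:ℕ) ≤ m)
          have hA1 : (1:ℝ) ≤ avec m w k := by
            rw [avec_mid' hkv0 hkL]; exact wcast_one_le hw _
          nlinarith [mul_nonneg (mul_nonneg
            (by linarith : (0:ℝ) ≤ (m:ℝ) + 2 - (((k:ℕ):ℝ) + 1))
            (by linarith : (0:ℝ) ≤ avec m w k)) hb1]
    have hsum_ite : ∑ k : Fin (m+2), (if k = (0 : Fin (m+2)) then eps else 0) = eps := by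
      rw [Finset.sum_ite_eq']; simp
    have h1 := Finset.sum_le_sum hterm
    rw [hsum_ite] at h1
    have h2 : ((m:ℝ) + 2) * ∑ k, avec m w k * y k ≤ ((m:ℝ) + 2) * b :=
      mul_le_mul_of_nonneg_left hy.1 (by positivity)
    rw [hcx']
    rw [hsplit]
    linarith
  -- value of the alternative pair
  have hval' : ∑ k, dvec m w k * x' k = -(Mval m w) + eps * ((b - eps) / Mval m w) := by
    rw [sum_split_s10 (fun k => dvec m w k * x' k)]
    have e0 : dvec m w 0 * x' 0 = -(Mval m w) := by
      rw [hx'0, dvec_zero' h0val, mul_one]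
    have eL : dvec m w (Fin.last (m+1)) * x' (Fin.last (m+1))
        = eps * ((b - eps) / Mval m w) := by
      rw [dvec_last' hLval, hx'L]
    have emid : (∑ k : Fin m, dvec m w k.castSucc.succ * x' k.castSucc.succ) = 0 := by
      apply Finset.sum_eq_zero
      intro k _
      rw [hx'mid k, mul_zero]
    rw [e0, eL, emid]
    ring
  have hlt' : ∑ k, dvec m w k * x' k < -Sw := by
    rw [hval']
    have h3 : eps * ((b - eps) / Mval m w) < eps * 1 :=
      mul_lt_mul_of_pos_left hq1 heps
    linarith
  -- conclude via the infimum
  have hbdd : BddBelow {v : ℝ | ∃ c x : Fin (m + 2) → ℝ,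
      inU m w c ∧ optimalKP (avec m w) c b x ∧ v = ∑ i, dvec m w i * x i} := by
    refine ⟨∑ k, -|dvec m w k|, ?_⟩
    rintro v ⟨c'', x'', _, hopt'', rfl⟩
    apply Finset.sum_le_sum
    intro k _
    have hb1 := (hopt''.1.2 k).1
    have hb2 := (hopt''.1.2 k).2
    nlinarith [mul_nonneg (show 0 ≤ dvec m w k + |dvec m w k| by
        linarith [neg_abs_le (dvec m w k)]) hb1,
      mul_nonneg (show (0:ℝ) ≤ 1 - x'' k by linarith) (abs_nonneg (dvec m w k))]
  have hmem : (∑ k, dvec m w k * x' k) ∈ {v : ℝ | ∃ c x : Fin (m + 2) → ℝ,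
      inU m w c ∧ optimalKP (avec m w) c b x ∧ v = ∑ i, dvec m w i * x i} :=
    ⟨c', x', hU', hopt', rfl⟩
  have hfle : fval m w b ≤ ∑ k, dvec m w k * x' k := csInf_le hbdd hmem
  rw [hattain] at hlow2
  linarith


end
end

section
/- In the discrete uncorrelated reduction instance, let V_1 < V_2 be two consecutive subset sums of {w_1, …, w_m} (i.e., both are of the form Σ_{i∈S} w_i for some S ⊆ {1,…,m}, and no subset sum lies strictly between them). Then f(b) = −M − V_1 + (ε/M)(b − V_1 − ε) for all b ∈ [V_1 + ε, V_2), and f(b) = min{ −M − V_1 + (ε/M)(b − V_1 − ε), −(M/ε)(b − V_2) − V_2 } for all b ∈ [V_2, V_2 + ε). -/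
noncomputable section

namespace BKP
open Finset
variable {k : ℕ} {a c x : Fin k → ℝ} {b : ℝ}

lemma sum_mul_update (f x : Fin k → ℝ) (i : Fin k) (u : ℝ) :
    ∑ j, f j * Function.update x i u j = (∑ j, f j * x j) + f i * (u - x i) := by
  have h : (fun j => f j * Function.update x i u j)
      = Function.update (fun j => f j * x j) i (f i * u) := by
    funext j
    by_cases h : j = i
    · subst h; simp
    · simp [Function.update_of_ne h]
  rw [h, Finset.sum_update_of_mem (Finset.mem_univ i)]
  rw [show (Finset.univ : Finset (Fin k)) \ {i} = Finset.univ.erase i from by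
    ext; simp [and_comm]]
  have h2 := Finset.add_sum_erase Finset.univ (fun j => f j * x j) (Finset.mem_univ i)
  ring_nf
  ring_nf at h2
  linarith

lemma budget_tight (ha : ∀ i, 0 < a i) (hc : ∀ i, 0 < c i)
    (hb : b < ∑ i, a i) (hx : optimalKP a c b x) : ∑ i, a i * x i = b := by
  by_contra hne
  have hlt : ∑ i, a i * x i < b := lt_of_le_of_ne hx.1.1 hne
  have hex : ∃ i, x i < 1 := by
    by_contra hall
    push_neg at hall
    have : ∑ i, a i * x i = ∑ i, a i := by
      apply Finset.sum_congr rfl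
      intro i _
      have := (hx.1.2 i).2
      have := hall i
      have : x i = 1 := le_antisymm (hx.1.2 i).2 (hall i)
      rw [this, mul_one]
    rw [this] at hlt
    linarith
  obtain ⟨i0, hi0⟩ := hex
  set δ : ℝ := min ((b - ∑ j, a j * x j) / a i0) (1 - x i0) with hδ
  have hδpos : 0 < δ := by
    apply lt_min
    · exact div_pos (by linarith) (ha i0)
    · linarith
  set y := Function.update x i0 (x i0 + δ) with hy
  have hay : ∑ j, a j * y j = (∑ j, a j * x j) + a i0 * δ := by
    rw [hy, sum_mul_update]; ring
  have hfeas : feasibleKP a b y := by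
    constructor
    · rw [hay]
      have h1 : δ ≤ (b - ∑ j, a j * x j) / a i0 := min_le_left _ _
      have h2 : δ * a i0 ≤ b - ∑ j, a j * x j := (le_div_iff₀ (ha i0)).1 h1
      linarith
    · intro l
      by_cases h : l = i0
      · subst h
        simp only [hy, Function.update_self]
        refine ⟨by linarith [(hx.1.2 l).1], ?_⟩
        have h2 : δ ≤ 1 - x l := min_le_right _ _
        linarith
      · simp only [hy, Function.update_of_ne h]
        exact hx.1.2 l
  have hcy : ∑ j, c j * y j = (∑ j, c j * x j) + c i0 * δ := by
    rw [hy, sum_mul_update]; ring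
  have := hx.2 y hfeas
  rw [hcy] at this
  nlinarith [hc i0]

lemma no_inversion (ha : ∀ i, 0 < a i) (hx : optimalKP a c b x)
    (i j : Fin k) (hij : c i * a j > c j * a i) : x i = 1 ∨ x j = 0 := by
  by_contra hcon
  push_neg at hcon
  have hxi : x i < 1 := lt_of_le_of_ne (hx.1.2 i).2 hcon.1
  have hxj : 0 < x j := lt_of_le_of_ne (hx.1.2 j).1 (Ne.symm hcon.2)
  have hij' : i ≠ j := by
    intro h; subst h; exact absurd hij (lt_irrefl _)
  set δ : ℝ := min (a i * (1 - x i)) (a j * x j) with hδ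
  have hδpos : 0 < δ := lt_min (mul_pos (ha i) (by linarith)) (mul_pos (ha j) hxj)
  set y := Function.update (Function.update x i (x i + δ / a i)) j (x j - δ / a j) with hy
  have hupd : Function.update x i (x i + δ / a i) j = x j :=
    Function.update_of_ne (Ne.symm hij') _ _
  have hsum : ∀ f : Fin k → ℝ, ∑ l, f l * y l
      = (∑ l, f l * x l) + f i * (δ / a i) - f j * (δ / a j) := by
    intro f
    rw [hy, sum_mul_update, sum_mul_update, hupd]
    ring
  have hfeas : feasibleKP a b y := by
    constructor
    · rw [hsum a]
      rw [mul_div_cancel₀ _ (ne_of_gt (ha i)), mul_div_cancel₀ _ (ne_of_gt (ha j))]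
      simpa using hx.1.1
    · intro l
      rcases eq_or_ne l j with rfl | hlj
      · simp only [hy, Function.update_self]
        constructor
        · have h1 : δ ≤ a l * x l := min_le_right _ _
          have h2 : δ / a l ≤ x l := (div_le_iff₀ (ha l)).2 (by linarith)
          linarith
        · have : 0 < δ / a l := div_pos hδpos (ha l)
          linarith [(hx.1.2 l).2]
      · rcases eq_or_ne l i with rfl | hli
        · simp only [hy, Function.update_of_ne hlj, Function.update_self]
          constructor
          · have : 0 < δ / a l := div_pos hδpos (ha l)
            linarith [(hx.1.2 l).1]
          · have h1 : δ ≤ a l * (1 - x l) := min_le_left _ _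
            have h2 : δ / a l ≤ 1 - x l := (div_le_iff₀ (ha l)).2 (by linarith)
            linarith
        · simp only [hy, Function.update_of_ne hlj, Function.update_of_ne hli]
          exact hx.1.2 l
  have hgain : ∑ l, c l * y l > ∑ l, c l * x l := by
    rw [hsum c]
    have hr : c j / a j < c i / a i := (div_lt_div_iff₀ (ha j) (ha i)).2 (by linarith)
    have e1 : c i * (δ / a i) = δ * (c i / a i) := by ring
    have e2 : c j * (δ / a j) = δ * (c j / a j) := by ring
    have h3 : δ * (c j / a j) < δ * (c i / a i) := by
      exact mul_lt_mul_of_pos_left hr hδpos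
    linarith
  exact absurd (hx.2 y hfeas) (not_le.2 hgain)

lemma opt_of_threshold (ρ : ℝ) (hρ : 0 ≤ ρ)
    (hfeas : feasibleKP a b x) (htight : ∑ i, a i * x i = b)
    (hhi : ∀ i, x i < 1 → c i ≤ ρ * a i)
    (hlo : ∀ i, 0 < x i → ρ * a i ≤ c i) : optimalKP a c b x := by
  refine ⟨hfeas, fun y hy => ?_⟩
  have key : ∀ i, c i * y i - c i * x i ≤ ρ * a i * (y i - x i) := by
    intro i
    rcases lt_trichotomy (x i) (y i) with h | h | h
    · have hx1 : x i < 1 := lt_of_lt_of_le h (hy.2 i).2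
      have := hhi i hx1
      nlinarith
    · rw [h]; ring_nf; exact le_refl _
    · have hx0 : 0 < x i := lt_of_le_of_lt (hy.2 i).1 h
      have := hlo i hx0
      nlinarith
  have h1 : ∑ i, (c i * y i - c i * x i) ≤ ∑ i, ρ * a i * (y i - x i) :=
    Finset.sum_le_sum (fun i _ => key i)
  rw [Finset.sum_sub_distrib] at h1
  have h2 : ∑ i, ρ * a i * (y i - x i) = ρ * ((∑ i, a i * y i) - ∑ i, a i * x i) := by
    rw [← Finset.sum_sub_distrib, Finset.mul_sum]
    apply Finset.sum_congr rfl
    intro i _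
    ring
  rw [h2, htight] at h1
  have h3 : (∑ i, a i * y i) - b ≤ 0 := by linarith [hy.1]
  nlinarith



open Finset

variable {m : ℕ} {w : Fin m → ℤ}

lemma eps_pos : (0:ℝ) < eps := by norm_num [eps]

/-- the middle index `i+1`. -/
def mid (i : Fin m) : Fin (m + 2) := i.castSucc.succ

lemma mid_val (i : Fin m) : ((mid i : Fin (m+2)) : ℕ) = (i : ℕ) + 1 := rfl

lemma avec_zero : avec m w 0 = eps := by simp [avec]

lemma avec_last : avec m w (Fin.last (m+1)) = Mval m w := by
  simp [avec, Fin.last]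

lemma avec_mid (i : Fin m) : avec m w (mid i) = (w i : ℝ) := by
  have h0 : ((mid i : Fin (m+2)) : ℕ) ≠ 0 := by simp [mid_val]
  have h1 : ((mid i : Fin (m+2)) : ℕ) ≠ m + 1 := by
    have := i.isLt; simp only [mid_val]; omega
  simp only [avec, dif_neg h0, dif_neg h1]
  congr 1

lemma dvec_zero : dvec m w 0 = -Mval m w := by simp [dvec]

lemma dvec_last : dvec m w (Fin.last (m+1)) = eps := by
  simp [dvec, Fin.last]

lemma dvec_mid (i : Fin m) : dvec m w (mid i) = -(w i : ℝ) := by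
  have h0 : ((mid i : Fin (m+2)) : ℕ) ≠ 0 := by simp [mid_val]
  have h1 : ((mid i : Fin (m+2)) : ℕ) ≠ m + 1 := by
    have := i.isLt; simp only [mid_val]; omega
  simp only [dvec, dif_neg h0, dif_neg h1]
  congr 2

lemma sum_split (f : Fin (m+2) → ℝ) :
    ∑ i, f i = f 0 + (∑ i : Fin m, f (mid i)) + f (Fin.last (m+1)) := by
  rw [Fin.sum_univ_castSucc, Fin.sum_univ_succ]
  have h0 : (Fin.castSucc 0 : Fin (m+2)) = 0 := rfl
  have hm : ∀ i : Fin m, (Fin.castSucc i).succ = mid i := fun i => rfl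
  simp only [mid, Fin.succ_castSucc, h0]

lemma sum_w_nonneg (hw : ∀ i, 1 ≤ w i) : (0:ℝ) ≤ ∑ i, (w i : ℝ) := by
  apply Finset.sum_nonneg
  intro i _
  exact_mod_cast (by linarith [hw i] : (0:ℤ) ≤ w i)

lemma M_pos (hw : ∀ i, 1 ≤ w i) : 0 < Mval m w := by
  have := sum_w_nonneg (w := w) hw
  have := eps_pos
  unfold Mval; linarith

lemma avec_pos (hw : ∀ i, 1 ≤ w i) (i : Fin (m+2)) : 0 < avec m w i := by
  unfold avec
  split
  · exact eps_pos
  · split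
    · exact M_pos hw
    · rename_i h0 h1
      have h : (0:ℤ) < w ⟨(i:ℕ)-1, by have := i.isLt; omega⟩ :=
        lt_of_lt_of_le one_pos (hw _)
      exact_mod_cast h

lemma sum_avec : ∑ i, avec m w i = 2 * Mval m w := by
  rw [sum_split (avec m w), avec_zero, avec_last]
  have : ∑ i : Fin m, avec m w (mid i) = ∑ i, (w i : ℝ) := by
    apply Finset.sum_congr rfl; intro i _; exact avec_mid i
  rw [this]; unfold Mval; ring


lemma fin_cases3 (j : Fin (m+2)) :
    j = 0 ∨ j = Fin.last (m+1) ∨ ∃ i : Fin m, j = mid i := by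
  have hj := j.isLt
  rcases eq_or_ne (j : ℕ) 0 with h0 | h0
  · exact Or.inl (Fin.ext h0)
  rcases eq_or_ne (j : ℕ) (m+1) with h1 | h1
  · exact Or.inr (Or.inl (Fin.ext h1))
  · refine Or.inr (Or.inr ⟨⟨(j:ℕ) - 1, by omega⟩, Fin.ext ?_⟩)
    simp only [mid_val]
    omega

lemma zero_ne_last : (0 : Fin (m+2)) ≠ Fin.last (m+1) := by
  intro h
  have : (0:ℕ) = m+1 := congrArg Fin.val h
  omega

lemma mid_ne_zero (i : Fin m) : mid i ≠ (0 : Fin (m+2)) := by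
  intro h
  have : (i:ℕ)+1 = 0 := congrArg Fin.val h
  omega

lemma mid_ne_last (i : Fin m) : mid i ≠ Fin.last (m+1) := by
  intro h
  have h2 : (i:ℕ)+1 = m+1 := congrArg Fin.val h
  have := i.isLt
  omega

/-- build a vector from values at 0, last, and middles. -/
def pack (u v : ℝ) (g : Fin m → ℝ) : Fin (m+2) → ℝ := fun j =>
  if h0 : (j : ℕ) = 0 then u
  else if h1 : (j : ℕ) = m + 1 then v
  else g ⟨(j : ℕ) - 1, by have := j.isLt; omega⟩

@[simp] lemma pack_zero (u v : ℝ) (g : Fin m → ℝ) : pack u v g 0 = u := rfl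

@[simp] lemma pack_last (u v : ℝ) (g : Fin m → ℝ) : pack u v g (Fin.last (m+1)) = v := by
  have h0 : ((Fin.last (m+1) : Fin (m+2)) : ℕ) = m+1 := rfl
  simp [pack, h0]

@[simp] lemma pack_mid (u v : ℝ) (g : Fin m → ℝ) (i : Fin m) : pack u v g (mid i) = g i := by
  have h0 : ((mid i : Fin (m+2)) : ℕ) ≠ 0 := by simp [mid_val]
  have h1 : ((mid i : Fin (m+2)) : ℕ) ≠ m + 1 := by
    have := i.isLt; simp only [mid_val]; omega
  simp only [pack, dif_neg h0, dif_neg h1]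
  congr 1

/-- the `d`-value of a budget-tight solution. -/
lemma dsum_eq {x : Fin (m+2) → ℝ} {b : ℝ}
    (ht : ∑ i, avec m w i * x i = b) :
    ∑ i, dvec m w i * x i
      = -b + (Mval m w + eps) * x (Fin.last (m+1)) - (Mval m w - eps) * x 0 := by
  have h1 := sum_split (fun i => avec m w i * x i)
  have h2 := sum_split (fun i => dvec m w i * x i)
  simp only [avec_zero, avec_last, avec_mid, dvec_zero, dvec_last, dvec_mid] at h1 h2
  have h3 : ∑ i : Fin m, -(w i : ℝ) * x (mid i) = -∑ i : Fin m, (w i : ℝ) * x (mid i) := by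
    rw [← Finset.sum_neg_distrib]
    apply Finset.sum_congr rfl; intro i _; ring
  rw [h3] at h2
  rw [ht] at h1
  rw [h2]
  linarith

lemma subsetSum_nonneg (hw : ∀ i, 1 ≤ w i) {V : ℝ} (hV : isSubsetSum m w V) : 0 ≤ V := by
  obtain ⟨S, rfl⟩ := hV
  apply Finset.sum_nonneg
  intro i _
  have := hw i
  exact_mod_cast (by linarith : (0:ℤ) ≤ w i)

lemma subsetSum_le (hw : ∀ i, 1 ≤ w i) {V : ℝ} (hV : isSubsetSum m w V) :
    V ≤ Mval m w - eps := by
  obtain ⟨S, rfl⟩ := hV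
  have : Mval m w - eps = ∑ i, (w i : ℝ) := by unfold Mval; ring
  rw [this]
  apply Finset.sum_le_sum_of_subset_of_nonneg (Finset.subset_univ S)
  intro i _ _
  have := hw i
  exact_mod_cast (by linarith : (0:ℤ) ≤ w i)

/-- high and low profit values. -/
def hi (i : Fin (m+2)) : ℝ := ((m:ℝ) + 2 + (((i : ℕ) : ℝ) + 1)) * avec m w i
def lo (i : Fin (m+2)) : ℝ := (((i : ℕ) : ℝ) + 1) * avec m w i
def cwit (S : Finset (Fin m)) (w : Fin m → ℤ) : Fin (m+2) → ℝ :=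
  pack (hi (w := w) 0) (lo (w := w) (Fin.last (m+1)))
    (fun i => if i ∈ S then hi (w := w) (mid i) else lo (w := w) (mid i))

lemma inU_cwit (S : Finset (Fin m)) : inU m w (cwit S w) := by
  intro j
  rcases fin_cases3 j with rfl | rfl | ⟨i, rfl⟩
  · right
    rw [show cwit S w 0 = hi (w := w) 0 from rfl]
    rfl
  · left
    rw [show cwit S w (Fin.last (m+1)) = lo (w := w) (Fin.last (m+1)) from pack_last _ _ _]
    rfl
  · by_cases h : i ∈ S
    · right
      rw [show cwit S w (mid i) = hi (w := w) (mid i) from by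
        rw [cwit, pack_mid, if_pos h]]
      rfl
    · left
      rw [show cwit S w (mid i) = lo (w := w) (mid i) from by
        rw [cwit, pack_mid, if_neg h]]
      rfl

lemma sum_pack (f : Fin (m+2) → ℝ) (u v : ℝ) (g : Fin m → ℝ) :
    ∑ j, f j * pack u v g j = f 0 * u + (∑ i : Fin m, f (mid i) * g i) + f (Fin.last (m+1)) * v := by
  rw [sum_split (fun j => f j * pack u v g j)]
  simp only [pack_zero, pack_last, pack_mid]

lemma sum_indicator (S : Finset (Fin m)) :
    ∑ i : Fin m, (w i : ℝ) * (if i ∈ S then (1:ℝ) else 0) = ∑ i ∈ S, (w i : ℝ) := by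
  simp only [mul_ite, mul_one, mul_zero]
  rw [Finset.sum_ite_mem, Finset.univ_inter]

lemma cast_le_cast_real {p q : ℕ} (h : p ≤ q) : (p : ℝ) ≤ (q : ℝ) := by exact_mod_cast h

/-- witness for the value `g1`. -/
lemma mem_W1 (hw : ∀ i, 1 ≤ w i) {V1 b : ℝ} (hV1 : isSubsetSum m w V1)
    (hb1 : V1 + eps ≤ b) (hbM : b - V1 - eps < Mval m w) :
    ∃ c x : Fin (m+2) → ℝ, inU m w c ∧ optimalKP (avec m w) c b x ∧
      -Mval m w - V1 + eps / Mval m w * (b - V1 - eps) = ∑ i, dvec m w i * x i := by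
  obtain ⟨S1, hS1⟩ := hV1
  have hM := M_pos (w := w) hw
  set t0 : ℝ := (b - V1 - eps) / Mval m w with ht0
  have ht0nn : 0 ≤ t0 := div_nonneg (by linarith) (le_of_lt hM)
  have ht0lt : t0 < 1 := (div_lt_one hM).2 (by linarith)
  set x : Fin (m+2) → ℝ := pack 1 t0 (fun i => if i ∈ S1 then (1:ℝ) else 0) with hx
  set c : Fin (m+2) → ℝ := cwit S1 w with hc
  have htight : ∑ i, avec m w i * x i = b := by
    rw [hx, sum_pack, avec_zero, avec_last]
    have : ∑ i : Fin m, avec m w (mid i) * (if i ∈ S1 then (1:ℝ) else 0)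
        = ∑ i ∈ S1, (w i : ℝ) := by
      rw [Finset.sum_congr rfl (fun i (_ : i ∈ Finset.univ) => by rw [avec_mid]),
        sum_indicator]
    rw [this, ← hS1, ht0]
    field_simp
    ring
  have hfeas : feasibleKP (avec m w) b x := by
    refine ⟨le_of_eq htight, fun j => ?_⟩
    rcases fin_cases3 j with rfl | rfl | ⟨i, rfl⟩
    · simp [hx]
    · simp only [hx, pack_last]
      exact ⟨ht0nn, le_of_lt ht0lt⟩
    · simp only [hx, pack_mid]
      split_ifs <;> norm_num
  have hopt : optimalKP (avec m w) c b x := by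
    apply opt_of_threshold ((m+2 : ℕ) : ℝ) (by positivity) hfeas htight
    · intro j hj
      rcases fin_cases3 j with rfl | rfl | ⟨i, rfl⟩
      · rw [hx] at hj; norm_num at hj
      · rw [hc, show cwit S1 w (Fin.last (m+1)) = lo (w := w) (Fin.last (m+1)) from
          pack_last _ _ _]
        unfold lo
        have hl : ((Fin.last (m+1) : Fin (m+2)) : ℕ) = m + 1 := rfl
        rw [hl]
        apply le_of_eq
        push_cast
        ring
      · rw [hx, pack_mid] at hj
        by_cases h : i ∈ S1
        · rw [if_pos h] at hj; norm_num at hj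
        · rw [hc, show cwit S1 w (mid i) = lo (w := w) (mid i) from by
            rw [cwit, pack_mid, if_neg h]]
          unfold lo
          apply mul_le_mul_of_nonneg_right _ (le_of_lt (avec_pos hw _))
          rw [mid_val]
          have hi2 : ((i:ℕ):ℝ) ≤ (m:ℝ) := by exact_mod_cast le_of_lt i.isLt
          push_cast
          linarith
    · intro j hj
      rcases fin_cases3 j with rfl | rfl | ⟨i, rfl⟩
      · rw [hc, show cwit S1 w 0 = hi (w := w) 0 from rfl]
        unfold hi
        apply mul_le_mul_of_nonneg_right _ (le_of_lt (avec_pos hw _))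
        have h0 : (((0 : Fin (m+2)):ℕ):ℝ) = 0 := by norm_num
        rw [h0]
        push_cast
        linarith
      · rw [hc, show cwit S1 w (Fin.last (m+1)) = lo (w := w) (Fin.last (m+1)) from
          pack_last _ _ _]
        unfold lo
        have hl : ((Fin.last (m+1) : Fin (m+2)) : ℕ) = m + 1 := rfl
        rw [hl]
        apply le_of_eq
        push_cast
        ring
      · rw [hx, pack_mid] at hj
        by_cases h : i ∈ S1
        · rw [hc, show cwit S1 w (mid i) = hi (w := w) (mid i) from by
            rw [cwit, pack_mid, if_pos h]]
          unfold hi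
          apply mul_le_mul_of_nonneg_right _ (le_of_lt (avec_pos hw _))
          have hnn : (0:ℝ) ≤ (((mid i : Fin (m+2)):ℕ):ℝ) := by positivity
          push_cast
          linarith
        · rw [if_neg h] at hj; norm_num at hj
  refine ⟨c, x, inU_cwit S1, hopt, ?_⟩
  rw [dsum_eq htight]
  rw [hx, pack_last, pack_zero, ht0]
  field_simp
  ring
/-- witness for the value `g2`. -/
lemma mem_W2 (hw : ∀ i, 1 ≤ w i) {V2 b : ℝ} (hV2 : isSubsetSum m w V2)
    (hb1 : V2 ≤ b) (hb2 : b < V2 + eps) :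
    ∃ c x : Fin (m+2) → ℝ, inU m w c ∧ optimalKP (avec m w) c b x ∧
      -(Mval m w / eps) * (b - V2) - V2 = ∑ i, dvec m w i * x i := by
  obtain ⟨S2, hS2⟩ := hV2
  have hM := M_pos (w := w) hw
  have he := eps_pos
  set s0 : ℝ := (b - V2) / eps with hs0
  have hs0nn : 0 ≤ s0 := div_nonneg (by linarith) (le_of_lt he)
  have hs0lt : s0 < 1 := (div_lt_one he).2 (by linarith)
  set x : Fin (m+2) → ℝ := pack s0 0 (fun i => if i ∈ S2 then (1:ℝ) else 0) with hx
  set c : Fin (m+2) → ℝ := cwit S2 w with hc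
  have htight : ∑ i, avec m w i * x i = b := by
    rw [hx, sum_pack, avec_zero, avec_last]
    have : ∑ i : Fin m, avec m w (mid i) * (if i ∈ S2 then (1:ℝ) else 0)
        = ∑ i ∈ S2, (w i : ℝ) := by
      rw [Finset.sum_congr rfl (fun i (_ : i ∈ Finset.univ) => by rw [avec_mid]),
        sum_indicator]
    rw [this, ← hS2, hs0]
    field_simp
    ring
  have hfeas : feasibleKP (avec m w) b x := by
    refine ⟨le_of_eq htight, fun j => ?_⟩
    rcases fin_cases3 j with rfl | rfl | ⟨i, rfl⟩
    · simp only [hx, pack_zero]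
      exact ⟨hs0nn, le_of_lt hs0lt⟩
    · simp [hx]
    · simp only [hx, pack_mid]
      split_ifs <;> norm_num
  have hopt : optimalKP (avec m w) c b x := by
    apply opt_of_threshold ((m:ℝ) + 3) (by positivity) hfeas htight
    · intro j hj
      rcases fin_cases3 j with rfl | rfl | ⟨i, rfl⟩
      · rw [hc, show cwit S2 w 0 = hi (w := w) 0 from rfl]
        unfold hi
        apply le_of_eq
        have h0 : (((0 : Fin (m+2)):ℕ):ℝ) = 0 := by norm_num
        rw [h0]
        ring
      · rw [hc, show cwit S2 w (Fin.last (m+1)) = lo (w := w) (Fin.last (m+1)) from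
          pack_last _ _ _]
        unfold lo
        apply mul_le_mul_of_nonneg_right _ (le_of_lt (avec_pos hw _))
        have hl : ((Fin.last (m+1) : Fin (m+2)) : ℕ) = m + 1 := rfl
        rw [hl]
        push_cast
        linarith
      · rw [hx, pack_mid] at hj
        by_cases h : i ∈ S2
        · rw [if_pos h] at hj; norm_num at hj
        · rw [hc, show cwit S2 w (mid i) = lo (w := w) (mid i) from by
            rw [cwit, pack_mid, if_neg h]]
          unfold lo
          apply mul_le_mul_of_nonneg_right _ (le_of_lt (avec_pos hw _))
          rw [mid_val]
          have hi2 : ((i:ℕ):ℝ) ≤ (m:ℝ) := by exact_mod_cast le_of_lt i.isLt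
          push_cast
          linarith
    · intro j hj
      rcases fin_cases3 j with rfl | rfl | ⟨i, rfl⟩
      · rw [hc, show cwit S2 w 0 = hi (w := w) 0 from rfl]
        unfold hi
        apply le_of_eq
        have h0 : (((0 : Fin (m+2)):ℕ):ℝ) = 0 := by norm_num
        rw [h0]
        ring
      · rw [hx, pack_last] at hj
        norm_num at hj
      · rw [hx, pack_mid] at hj
        by_cases h : i ∈ S2
        · rw [hc, show cwit S2 w (mid i) = hi (w := w) (mid i) from by
            rw [cwit, pack_mid, if_pos h]]
          unfold hi
          apply mul_le_mul_of_nonneg_right _ (le_of_lt (avec_pos hw _))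
          have hnn : (0:ℝ) ≤ (((mid i : Fin (m+2)):ℕ):ℝ) := by positivity
          push_cast
          linarith
        · rw [if_neg h] at hj; norm_num at hj
  refine ⟨c, x, inU_cwit S2, hopt, ?_⟩
  rw [dsum_eq htight]
  rw [hx, pack_last, pack_zero, hs0]
  field_simp
  ring
set_option maxHeartbeats 2000000 in
open Classical in
lemma core_lb (hw : ∀ i, 1 ≤ w i)
    {V1 V2 b : ℝ} (hV1 : isSubsetSum m w V1) (hV2 : isSubsetSum m w V2)
    (h12 : V1 < V2)
    (hcons : ∀ V : ℝ, isSubsetSum m w V → ¬ (V1 < V ∧ V < V2))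
    (hb1 : V1 + eps ≤ b) (hb2 : b < V2 + eps)
    {c x : Fin (m+2) → ℝ} (hc : inU m w c) (hx : optimalKP (avec m w) c b x) :
    -Mval m w - V1 + eps / Mval m w * (b - V1 - eps) ≤ ∑ i, dvec m w i * x i
      ∨ (V2 ≤ b ∧ -(Mval m w / eps) * (b - V2) - V2 ≤ ∑ i, dvec m w i * x i) := by
  have he := eps_pos
  have hM := M_pos (w := w) hw
  have hV1nn : 0 ≤ V1 := subsetSum_nonneg hw hV1
  have hV2le : V2 ≤ Mval m w - eps := subsetSum_le hw hV2
  have hMe : eps ≤ Mval m w := by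
    have := sum_w_nonneg (w := w) hw
    unfold Mval; linarith
  have hbM : b < Mval m w := by linarith
  -- positivity of profits
  have hanz := avec_pos (w := w) hw
  have hcpos : ∀ i, 0 < c i := by
    intro i
    rcases hc i with h | h <;> rw [h]
    · exact mul_pos (by positivity) (hanz i)
    · exact mul_pos (by positivity) (hanz i)
  -- tight budget
  have htight : ∑ i, avec m w i * x i = b :=
    budget_tight hanz hcpos (by rw [sum_avec]; linarith) hx
  have hd := dsum_eq htight
  have hxb := hx.1.2
  obtain ⟨hs0, hs1⟩ := hxb (0 : Fin (m+2))
  obtain ⟨ht0, ht1⟩ := hxb (Fin.last (m+1))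
  -- the high-profit predicate
  set Hp : Fin (m+2) → Prop := fun i => c i = hi (w := w) i with hHp
  have hlow : ∀ i, ¬ Hp i → c i = lo (w := w) i := by
    intro i h
    exact (hc i).resolve_right h
  have hhigh : ∀ i, Hp i → c i = hi (w := w) i := fun i h => h
  -- no-inversion instances
  have ni1 : ∀ i j, Hp i → ¬ Hp j → x i = 1 ∨ x j = 0 := by
    intro i j h1 h2
    apply no_inversion hanz hx
    rw [hhigh i h1, hlow j h2]
    unfold hi lo
    have hj2 : ((j:ℕ):ℝ) ≤ (m:ℝ) + 1 := by exact_mod_cast Nat.lt_succ_iff.1 j.isLt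
    have hinn : (0:ℝ) ≤ ((i:ℕ):ℝ) := by positivity
    have hcoef : (((j:ℕ):ℝ) + 1) < ((m:ℝ) + 2 + (((i:ℕ):ℝ) + 1)) := by linarith
    nlinarith [mul_pos (hanz i) (hanz j)]
  have ni2 : ∀ i j, Hp i → Hp j → (j:ℕ) < (i:ℕ) → x i = 1 ∨ x j = 0 := by
    intro i j h1 h2 hji
    apply no_inversion hanz hx
    rw [hhigh i h1, hhigh j h2]
    unfold hi
    have hji' : ((j:ℕ):ℝ) < ((i:ℕ):ℝ) := by exact_mod_cast hji
    have hcoef : ((m:ℝ) + 2 + (((j:ℕ):ℝ) + 1)) < ((m:ℝ) + 2 + (((i:ℕ):ℝ) + 1)) := by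
      linarith
    nlinarith [mul_pos (hanz i) (hanz j)]
  have ni3 : ∀ i j, ¬ Hp i → ¬ Hp j → (j:ℕ) < (i:ℕ) → x i = 1 ∨ x j = 0 := by
    intro i j h1 h2 hji
    apply no_inversion hanz hx
    rw [hlow i h1, hlow j h2]
    unfold lo
    have hji' : ((j:ℕ):ℝ) < ((i:ℕ):ℝ) := by exact_mod_cast hji
    have hcoef : (((j:ℕ):ℝ) + 1) < (((i:ℕ):ℝ) + 1) := by linarith
    nlinarith [mul_pos (hanz i) (hanz j)]
  -- budget split
  have hsplit : eps * x 0 + (∑ i : Fin m, (w i:ℝ) * x (mid i))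
      + Mval m w * x (Fin.last (m+1)) = b := by
    have h1 := sum_split (fun i => avec m w i * x i)
    simp only [avec_zero, avec_last, avec_mid] at h1
    rw [htight] at h1
    linarith
  -- handy bounds involving the divisions
  have hre : eps / Mval m w * (b - V1 - eps) ≤ eps := by
    rw [div_mul_eq_mul_div, div_le_iff₀ hM]
    nlinarith
  have hrenn : 0 ≤ eps / Mval m w * (b - V1 - eps) := by
    apply mul_nonneg (by positivity)
    linarith
  have h1leMeps : (1:ℝ) ≤ Mval m w / eps := (one_le_div he).2 hMe
  -- main case analysis
  rcases eq_or_lt_of_le ht1 with ht1e | htlt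
  · -- x last = 1
    left
    rw [hd]
    nlinarith [mul_nonneg (by linarith : (0:ℝ) ≤ Mval m w - eps) (by linarith : 0 ≤ 1 - x 0)]
  by_cases hHlast : Hp (Fin.last (m+1))
  · -- the big item is high: everything else is 0
    left
    have hall0 : ∀ j : Fin (m+2), j ≠ Fin.last (m+1) → x j = 0 := by
      intro j hj
      have hjv : (j:ℕ) < m + 1 := by
        have h1 : (j:ℕ) < m + 2 := j.isLt
        have h2 : (j:ℕ) ≠ m + 1 := fun h => hj (Fin.ext h)
        omega
      have hlast1 : x (Fin.last (m+1)) ≠ 1 := ne_of_lt htlt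
      by_cases hpj : Hp j
      · exact (ni2 (Fin.last (m+1)) j hHlast hpj hjv).resolve_left hlast1
      · exact (ni1 (Fin.last (m+1)) j hHlast hpj).resolve_left hlast1
    have hzv : x (0 : Fin (m+2)) = 0 := hall0 0 zero_ne_last
    have hmids0 : ∑ i : Fin m, (w i:ℝ) * x (mid i) = 0 :=
      Finset.sum_eq_zero (fun i _ => by rw [hall0 (mid i) (mid_ne_last i), mul_zero])
    rw [hmids0, hzv] at hsplit
    rw [hd, hzv]
    nlinarith [mul_nonneg (le_of_lt he) ht0]
  · -- the big item is low
    have hL0 : ∀ j : Fin (m+2), j ≠ Fin.last (m+1) → ¬ Hp j → x j = 0 := by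
      intro j hj hpj
      have hjv : (j:ℕ) < m + 1 := by
        have h1 : (j:ℕ) < m + 2 := j.isLt
        have h2 : (j:ℕ) ≠ m + 1 := fun h => hj (Fin.ext h)
        omega
      exact (ni3 (Fin.last (m+1)) j hHlast hpj hjv).resolve_left (ne_of_lt htlt)
    rcases eq_or_lt_of_le ht0 with ht0e | htpos
    · -- x last = 0
      rcases eq_or_lt_of_le hs0 with hs0e | hspos
      · -- x 0 = 0 as well
        by_cases hV2b : V2 ≤ b
        · right
          refine ⟨hV2b, ?_⟩
          rw [hd, ← ht0e, ← hs0e]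
          nlinarith [mul_le_mul_of_nonneg_right h1leMeps (by linarith : (0:ℝ) ≤ b - V2)]
        · left
          rw [hd, ← ht0e, ← hs0e]
          push_neg at hV2b
          nlinarith
      · -- x 0 > 0
        have hHp0 : Hp 0 := by
          by_contra hp0
          have := hL0 0 zero_ne_last hp0
          linarith
        have hmid1 : ∀ j : Fin (m+2), j ≠ 0 → Hp j → x j = 1 := by
          intro j hj hpj
          have hjv : (0:ℕ) < (j:ℕ) := by
            have : (j:ℕ) ≠ 0 := fun h => hj (Fin.ext h)
            omega
          rcases ni2 j 0 hpj hHp0 hjv with h | h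
          · exact h
          · exfalso; linarith
        have hx_mid : ∀ i : Fin m, x (mid i) = if Hp (mid i) then 1 else 0 := by
          intro i
          by_cases h : Hp (mid i)
          · rw [if_pos h]; exact hmid1 (mid i) (mid_ne_zero i) h
          · rw [if_neg h]; exact hL0 (mid i) (mid_ne_last i) h
        set S : Finset (Fin m) := Finset.univ.filter (fun i => Hp (mid i)) with hS
        set VH : ℝ := ∑ i ∈ S, (w i : ℝ) with hVH
        have hVHss : isSubsetSum m w VH := ⟨S, rfl⟩
        have hmids : ∑ i : Fin m, (w i:ℝ) * x (mid i) = VH := by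
          rw [hVH, hS, Finset.sum_filter]
          apply Finset.sum_congr rfl
          intro i _
          rw [hx_mid i]
          split_ifs <;> simp
        rw [hmids] at hsplit
        rcases eq_or_lt_of_le hs1 with hs1e | hslt
        · -- x 0 = 1 : b = eps + VH, so VH = V1 and b = V1 + eps
          left
          have hbeq : b = eps + VH := by rw [← hsplit, hs1e, ← ht0e]; ring
          have hVH1 : VH ≤ V1 := by
            by_contra hcon
            push_neg at hcon
            exact hcons VH hVHss ⟨hcon, by linarith⟩
          have hbv : b - V1 - eps = 0 := by
            have hge : V1 ≤ VH := by linarith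
            have : VH = V1 := le_antisymm hVH1 hge
            linarith
          rw [hd, ← ht0e, hs1e]
          rw [hbv, mul_zero]
          linarith
        · -- 0 < x 0 < 1 : fractional item is item 0; V2 ≤ VH
          right
          have hbeq : eps * x 0 + VH = b := by rw [← hsplit, ← ht0e]; ring
          have hV1VH : V1 < VH := by
            nlinarith [mul_lt_mul_of_pos_left hslt he]
          have hV2VH : V2 ≤ VH := by
            by_contra hcon
            push_neg at hcon
            exact hcons VH hVHss ⟨hV1VH, hcon⟩
          have hbV2 : V2 ≤ b := by nlinarith [mul_nonneg (le_of_lt he) hs0]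
          refine ⟨hbV2, ?_⟩
          rw [hd, ← ht0e]
          have h1 : eps * x 0 ≤ b - V2 := by linarith
          have heq : eps * (Mval m w / eps * (b - V2)) = Mval m w * (b - V2) := by
            field_simp
          nlinarith [mul_le_mul_of_nonneg_left h1 (by linarith : (0:ℝ) ≤ Mval m w - eps)]
    · -- x last > 0 : all high items are full
      have hH1 : ∀ j : Fin (m+2), Hp j → x j = 1 := by
        intro j hpj
        have hjne : j ≠ Fin.last (m+1) := fun h => hHlast (h ▸ hpj)
        rcases ni1 j (Fin.last (m+1)) hpj hHlast with h | h
        · exact h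
        · exfalso; linarith
      have hx_mid : ∀ i : Fin m, x (mid i) = if Hp (mid i) then 1 else 0 := by
        intro i
        by_cases h : Hp (mid i)
        · rw [if_pos h]; exact hH1 (mid i) h
        · rw [if_neg h]; exact hL0 (mid i) (mid_ne_last i) h
      set S : Finset (Fin m) := Finset.univ.filter (fun i => Hp (mid i)) with hS
      set VH : ℝ := ∑ i ∈ S, (w i : ℝ) with hVH
      have hVHss : isSubsetSum m w VH := ⟨S, rfl⟩
      have hVHnn : 0 ≤ VH := subsetSum_nonneg hw hVHss
      have hmids : ∑ i : Fin m, (w i:ℝ) * x (mid i) = VH := by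
        rw [hVH, hS, Finset.sum_filter]
        apply Finset.sum_congr rfl
        intro i _
        rw [hx_mid i]
        split_ifs <;> simp
      rw [hmids] at hsplit
      by_cases hHp0 : Hp 0
      · -- item 0 full: b = eps + VH + M t with VH ≤ V1
        left
        have hz1 : x (0 : Fin (m+2)) = 1 := hH1 0 hHp0
        have hVHV2 : VH < V2 := by
          nlinarith [mul_pos hM htpos]
        have hVH1 : VH ≤ V1 := by
          by_contra hcon
          push_neg at hcon
          exact hcons VH hVHss ⟨hcon, hVHV2⟩
        rw [hz1, mul_one] at hsplit
        rw [hd, hz1]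
        have hMt : b - V1 - eps ≤ Mval m w * x (Fin.last (m+1)) := by linarith
        have hrt : eps / Mval m w * (b - V1 - eps) ≤ eps * x (Fin.last (m+1)) := by
          rw [div_mul_eq_mul_div, div_le_iff₀ hM]
          nlinarith [mul_le_mul_of_nonneg_left hMt (le_of_lt he)]
        linarith
      · -- item 0 empty
        have hz0 : x (0 : Fin (m+2)) = 0 := hL0 0 zero_ne_last hHp0
        by_cases hV2b : V2 ≤ b
        · right
          refine ⟨hV2b, ?_⟩
          rw [hd, hz0]
          nlinarith [mul_le_mul_of_nonneg_right h1leMeps (by linarith : (0:ℝ) ≤ b - V2),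
            mul_nonneg (by linarith : (0:ℝ) ≤ Mval m w + eps) ht0]
        · left
          rw [hd, hz0]
          push_neg at hV2b
          nlinarith [mul_nonneg (by linarith : (0:ℝ) ≤ Mval m w + eps) ht0]
lemma subsetSum_int {V : ℝ} (hV : isSubsetSum m w V) : ∃ z : ℤ, V = (z:ℝ) := by
  obtain ⟨S, rfl⟩ := hV
  exact ⟨∑ i ∈ S, w i, by push_cast; rfl⟩

lemma gap_ge_one {V1 V2 : ℝ} (hV1 : isSubsetSum m w V1) (hV2 : isSubsetSum m w V2)
    (h12 : V1 < V2) : V1 + 1 ≤ V2 := by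
  obtain ⟨z1, rfl⟩ := subsetSum_int hV1
  obtain ⟨z2, rfl⟩ := subsetSum_int hV2
  have : z1 < z2 := by exact_mod_cast h12
  have : z1 + 1 ≤ z2 := this
  exact_mod_cast this

end BKP

/-- Shape of the leader's objective function `f` of the discrete uncorrelated
reduction instance between two consecutive subset sums `V₁ < V₂`. -/
theorem discrete_uncorrelated_shape_of_f
    (m : ℕ) (w : Fin m → ℤ) (W : ℤ) (hw : ∀ i, 1 ≤ w i)
    (hW1 : 1 ≤ W) (hW2 : W ≤ (∑ i, w i) - 1)
    (V1 V2 : ℝ) (hV1 : isSubsetSum m w V1) (hV2 : isSubsetSum m w V2)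
    (h12 : V1 < V2)
    (hcons : ∀ V : ℝ, isSubsetSum m w V → ¬ (V1 < V ∧ V < V2)) :
    (∀ b : ℝ, V1 + eps ≤ b → b < V2 →
      fval m w b = -Mval m w - V1 + eps / Mval m w * (b - V1 - eps)) ∧
    (∀ b : ℝ, V2 ≤ b → b < V2 + eps →
      fval m w b = min (-Mval m w - V1 + eps / Mval m w * (b - V1 - eps))
        (-(Mval m w / eps) * (b - V2) - V2)) := by
  have hM := BKP.M_pos (w := w) hw
  have he := BKP.eps_pos
  have hV1nn := BKP.subsetSum_nonneg hw hV1
  have hV2le := BKP.subsetSum_le hw hV2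
  constructor
  · intro b hb1 hb2
    have hb2' : b < V2 + eps := by linarith
    have hlb : ∀ v ∈ {v : ℝ | ∃ c x : Fin (m + 2) → ℝ,
        inU m w c ∧ optimalKP (avec m w) c b x ∧ v = ∑ i, dvec m w i * x i},
        -Mval m w - V1 + eps / Mval m w * (b - V1 - eps) ≤ v := by
      rintro v ⟨c, x, hc, hx, rfl⟩
      rcases BKP.core_lb hw hV1 hV2 h12 hcons hb1 hb2' hc hx with h | ⟨h2, _⟩
      · exact h
      · linarith
    obtain ⟨c, x, hc, hx, hval⟩ :=
      BKP.mem_W1 hw hV1 hb1 (by linarith : b - V1 - eps < Mval m w)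
    unfold fval
    apply le_antisymm
    · exact csInf_le ⟨_, fun v hv => hlb v hv⟩ ⟨c, x, hc, hx, hval⟩
    · exact le_csInf ⟨_, ⟨c, x, hc, hx, hval⟩⟩ hlb
  · intro b hb1 hb2
    have hgap := BKP.gap_ge_one hV1 hV2 h12
    have hb1' : V1 + eps ≤ b := by
      have : eps ≤ 1 := by norm_num [eps]
      linarith
    have hlb : ∀ v ∈ {v : ℝ | ∃ c x : Fin (m + 2) → ℝ,
        inU m w c ∧ optimalKP (avec m w) c b x ∧ v = ∑ i, dvec m w i * x i},
        min (-Mval m w - V1 + eps / Mval m w * (b - V1 - eps))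
          (-(Mval m w / eps) * (b - V2) - V2) ≤ v := by
      rintro v ⟨c, x, hc, hx, rfl⟩
      rcases BKP.core_lb hw hV1 hV2 h12 hcons hb1' hb2 hc hx with h | ⟨_, h⟩
      · exact le_trans (min_le_left _ _) h
      · exact le_trans (min_le_right _ _) h
    obtain ⟨c1, x1, hc1, hx1, hval1⟩ :=
      BKP.mem_W1 hw hV1 hb1' (by linarith : b - V1 - eps < Mval m w)
    obtain ⟨c2, x2, hc2, hx2, hval2⟩ := BKP.mem_W2 hw hV2 hb1 hb2
    unfold fval
    apply le_antisymm
    · apply le_min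
      · exact csInf_le ⟨_, fun v hv => hlb v hv⟩ ⟨c1, x1, hc1, hx1, hval1⟩
      · exact csInf_le ⟨_, fun v hv => hlb v hv⟩ ⟨c2, x2, hc2, hx2, hval2⟩
    · exact le_csInf ⟨_, ⟨c1, x1, hc1, hx1, hval1⟩⟩ hlb

end
end
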